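/- arXiv:1011.4583 — 2 statements merged into one kernel-verified Lean document; each statement's English description precedes it below -/
import Mathlib

section
/- For every w ∈ 𝔚_p one has w_0 w w_p ∈ 𝔚_p, and there exists a sign ε_p ∈ {1, −1}, depending only on p, such that for every w ∈ 𝔚_p and all s ∈ ℂ: X̃_{p,w}(−c_p − s) = X̃_{p, w_0 w w_p}(s), Q̃_{p,w}(−c_p − s) = ε_p Q̃_{p, w_0 w w_p}(s), and Q_p(−c_p − s) = ε_p Q_p(s); consequently X_p(−c_p − s) = ε_p X_p(s) for all s ∈ ℂ. -/
open scoped Classical RealInnerProductSpace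

noncomputable section
set_option linter.unusedSectionVars false
set_option linter.unusedVariables false
set_option maxHeartbeats 1000000

namespace Weng

/-- The completed Riemann zeta function `ζ̂(s) = π^(-s/2) Γ(s/2) ζ(s)`. -/
def zetaHat (s : ℂ) : ℂ := completedRiemannZeta s

/-- The entire Riemann xi function `ξ(s) = s (s-1) ζ̂(s)`
(written in terms of the entire function `Λ₀` so that the removable singularities
at `s = 0, 1` are correctly filled in). -/
def xi (s : ℂ) : ℂ := s * (s - 1) * completedRiemannZeta₀ s + 1

variable (V : Type) [NormedAddCommGroup V] [InnerProductSpace ℝ V] [FiniteDimensional ℝ V]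

/-- The coroot `α^∨ = 2 α / ⟨α, α⟩` of a vector `α`. -/
def coroot (α : V) : V := (2 / ⟪α, α⟫) • α

/-- Reflection in the hyperplane orthogonal to `α`. -/
def srefl (α : V) : V ≃ₗᵢ[ℝ] V := Submodule.reflection (ℝ ∙ α)ᗮ

variable {V}

/-- A reduced irreducible crystallographic root system `Φ` in a finite dimensional real
inner product space `V`, together with a fundamental system `Δ = {α_1, …, α_r}` (indexed by
`Fin r`), the corresponding positive system `Φ⁺` (`Pos`), and the fundamental weights
`λ_1, …, λ_r` (`fw`). -/
structure RootSystemData (V : Type) [NormedAddCommGroup V] [InnerProductSpace ℝ V]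
    [FiniteDimensional ℝ V] : Type where
  /-- the rank -/
  r : ℕ
  /-- the root system -/
  Φ : Finset V
  /-- the simple roots -/
  Δ : Fin r → V
  /-- the positive roots -/
  Pos : Finset V
  /-- the fundamental weights -/
  fw : Fin r → V
  hΔinj : Function.Injective Δ
  hΔPos : ∀ j, Δ j ∈ Pos
  hspan : Submodule.span ℝ (Φ : Set V) = ⊤
  hzero : (0 : V) ∉ Φ
  hreduced : ∀ α ∈ Φ, ∀ t : ℝ, t • α ∈ (Φ : Set V) → t = 1 ∨ t = -1
  hcrys : ∀ α ∈ Φ, ∀ β ∈ Φ, ∃ n : ℤ, ⟪β, coroot V α⟫ = (n : ℝ)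
  hrefl : ∀ α ∈ Φ, ∀ β ∈ Φ, β - ⟪β, coroot V α⟫ • α ∈ Φ
  hirred : ∀ S T : Finset V, S ∪ T = Φ → (∀ a ∈ S, ∀ b ∈ T, ⟪a, b⟫ = 0) →
    S = ∅ ∨ T = ∅
  hPosSub : Pos ⊆ Φ
  hNegSub : ∀ α ∈ Pos, -α ∈ Φ
  hPosDec : ∀ α ∈ Φ, (α ∈ Pos ∧ -α ∉ Pos) ∨ (α ∉ Pos ∧ -α ∈ Pos)
  hPosComb : ∀ α ∈ Pos, ∃ c : Fin r → ℕ, α = ∑ j, (c j : ℝ) • Δ j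
  hfw : ∀ i j, ⟪fw i, coroot V (Δ j)⟫ = if i = j then 1 else 0

namespace RootSystemData

variable {V : Type} [NormedAddCommGroup V] [InnerProductSpace ℝ V] [FiniteDimensional ℝ V]
variable (d : RootSystemData V)

/-- The set `Φ⁻ = -Φ⁺` of negative roots, as a `Finset`. -/
def NegS : Finset V := d.Pos.image (fun α => -α)

/-- The Weyl vector `ρ = (1/2) Σ_{α ∈ Φ⁺} α`. -/
def rho : V := (2⁻¹ : ℝ) • ∑ α ∈ d.Pos, α

/-- The height `ht α^∨ = ⟨ρ, α^∨⟩` of the coroot of `α`. -/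
def ht (α : V) : ℝ := ⟪d.rho, coroot V α⟫

/-- The Weyl group `W`, as the subgroup of the group of linear isometries of `V`
generated by the reflections in the simple roots. -/
def W : Subgroup (V ≃ₗᵢ[ℝ] V) := Subgroup.closure (Set.range fun j => srefl V (d.Δ j))

/-- The subset `Δ_p = Δ \ {α_p}` of the simple roots, as a set of vectors. -/
def DeltaP (p : Fin d.r) : Set V := d.Δ '' {j | j ≠ p}

/-- `Δ_p` as a `Finset`. -/
def DeltaPFin (p : Fin d.r) : Finset V := (Finset.univ.filter (fun j => j ≠ p)).image d.Δ

/-- The subgroup `W_p` of `W` generated by the reflections in the simple roots in `Δ_p`. -/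
def Wp (p : Fin d.r) : Subgroup (V ≃ₗᵢ[ℝ] V) :=
  Subgroup.closure ((fun j => srefl V (d.Δ j)) '' {j | j ≠ p})

/-- The root subsystem `Φ_p = Φ ∩ span_ℝ(Δ_p)`. -/
def PhiP (p : Fin d.r) : Finset V :=
  d.Φ.filter (fun α => α ∈ Submodule.span ℝ (d.DeltaP p))

/-- The positive system `Φ_p⁺ = Φ⁺ ∩ Φ_p` of `Φ_p`. -/
def PhiPpos (p : Fin d.r) : Finset V := d.Pos ∩ d.PhiP p

/-- `ρ_p = (1/2) Σ_{α ∈ Φ_p⁺} α`. -/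
def rhoP (p : Fin d.r) : V := (2⁻¹ : ℝ) • ∑ α ∈ d.PhiPpos p, α

/-- The constant `c_p = 2 ⟨λ_p - ρ_p, α_p^∨⟩`. -/
def cp (p : Fin d.r) : ℝ := 2 * ⟪d.fw p - d.rhoP p, coroot V (d.Δ p)⟫

/-- The set `𝔚_p = {w ∈ W : Δ_p ⊆ w⁻¹(Δ ∪ Φ⁻)}`. -/
def frakW (p : Fin d.r) : Set (V ≃ₗᵢ[ℝ] V) :=
  {w | w ∈ d.W ∧ ∀ j : Fin d.r, j ≠ p →
    (w (d.Δ j) ∈ Set.range d.Δ ∨ w (d.Δ j) ∈ d.NegS)}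

/-- `l_p(w) = |(Φ⁺ \ Φ_p⁺) ∩ w⁻¹ Φ⁻|`. -/
def lp (p : Fin d.r) (w : V ≃ₗᵢ[ℝ] V) : ℕ :=
  ((d.Pos \ d.PhiPpos p).filter (fun α => w α ∈ d.NegS)).card

/-- `N_{p,w}(k,h) = #{α ∈ w⁻¹Φ⁻ : ⟨λ_p, α^∨⟩ = k, ht α^∨ = h}`. -/
def Npw (p : Fin d.r) (w : V ≃ₗᵢ[ℝ] V) (k h : ℝ) : ℕ :=
  (d.Φ.filter (fun α => w α ∈ d.NegS ∧ ⟪d.fw p, coroot V α⟫ = k ∧ d.ht α = h)).card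

/-- `N_p(k,h) = #{α ∈ Φ : ⟨λ_p, α^∨⟩ = k, ht α^∨ = h}`. -/
def Np (p : Fin d.r) (k h : ℝ) : ℕ :=
  (d.Φ.filter (fun α => ⟪d.fw p, coroot V α⟫ = k ∧ d.ht α = h)).card

/-- `M_p(k,h) = max_{w ∈ 𝔚_p} (N_{p,w}(k,h-1) - N_{p,w}(k,h))`. -/
def Mp (p : Fin d.r) (k h : ℝ) : ℤ :=
  sSup {n : ℤ | ∃ w ∈ d.frakW p, n = (d.Npw p w k (h - 1) : ℤ) - (d.Npw p w k h : ℤ)}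

/-- The period `ω_p(s)`. -/
def omegaP (p : Fin d.r) (s : ℂ) : ℂ :=
  ∑ᶠ w ∈ d.frakW p,
    (∏ α ∈ d.Φ.filter (fun α => w α ∈ Set.range d.Δ ∧ α ∉ d.DeltaP p),
        ((⟪d.fw p, coroot V α⟫ : ℂ) * s + (d.ht α : ℂ) - 1)⁻¹) *
    (∏ α ∈ d.Pos.filter (fun α => w α ∈ d.NegS ∧ α ∉ d.DeltaP p),
        zetaHat ((⟪d.fw p, coroot V α⟫ : ℂ) * s + (d.ht α : ℂ))) *
    (∏ α ∈ d.Φ.filter (fun α => -α ∈ d.Pos ∧ w (-α) ∈ d.NegS),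
        (zetaHat ((⟪d.fw p, coroot V α⟫ : ℂ) * s + (d.ht α : ℂ)))⁻¹)

/-- The Weng zeta function
`ζ̂_p(s) = ω_p(s) ∏_{k ≥ 0} ∏_{h ≥ 2} ζ̂(k s + h)^{M_p(k,h)}`
(the product is finite: `M_p(k,h) = 0` outside of the displayed finite range). -/
def zetaWeng (p : Fin d.r) (s : ℂ) : ℂ :=
  d.omegaP p s *
    ∏ k ∈ Finset.range (d.Φ.card + 2), ∏ h ∈ Finset.range (d.Φ.card + 2),
      (if 2 ≤ h then zetaHat ((k : ℂ) * s + (h : ℂ)) ^ (d.Mp p (k : ℝ) (h : ℝ)) else 1)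


/-- `δ_{α,w} = 1` if `α ∈ w⁻¹Φ⁺`, and `δ_{α,w} = 0` if `α ∈ w⁻¹Φ⁻`. -/
def deltaIdx (w : V ≃ₗᵢ[ℝ] V) (α : V) : ℕ := if w α ∈ d.Pos then 1 else 0

/-- `X̃_{p,w}(s) = ξ(2)^{|Δ_p ∩ w⁻¹Φ⁺|} ∏_{α ∈ Φ⁺ \ Δ_p} ξ(⟨λ_p,α^∨⟩ s + ht α^∨ + δ_{α,w})`. -/
def Xtilde (p : Fin d.r) (w : V ≃ₗᵢ[ℝ] V) (s : ℂ) : ℂ :=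
  xi 2 ^ ((d.DeltaPFin p).filter (fun α => w α ∈ d.Pos)).card *
  ∏ α ∈ d.Pos.filter (fun α => α ∉ d.DeltaP p),
    xi ((⟪d.fw p, coroot V α⟫ : ℂ) * s + (d.ht α : ℂ) + (d.deltaIdx w α : ℂ))

/-- The polynomial factor attached to a single `v ∈ 𝔚_p` appearing in `Q̃_{p,w}` and `Q_p`. -/
def Qfactor (p : Fin d.r) (v : V ≃ₗᵢ[ℝ] V) (s : ℂ) : ℂ :=
  (2 : ℂ) ^ ((d.DeltaPFin p).filter (fun α => v α ∈ d.Pos)).card *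
  (∏ α ∈ d.Φ.filter (fun α => v α ∈ Set.range d.Δ ∧ α ∉ d.DeltaP p),
      ((⟪d.fw p, coroot V α⟫ : ℂ) * s + (d.ht α : ℂ) - 1)) *
  ∏ α ∈ d.Pos.filter (fun α => α ∉ d.DeltaP p),
    ((⟪d.fw p, coroot V α⟫ : ℂ) * s + (d.ht α : ℂ) + (d.deltaIdx v α : ℂ)) *
      ((⟪d.fw p, coroot V α⟫ : ℂ) * s + (d.ht α : ℂ) + (d.deltaIdx v α : ℂ) - 1)

/-- The polynomial `Q̃_{p,w}(s)` (product of the `Qfactor`s over all `v ∈ 𝔚_p`, `v ≠ w`). -/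
def Qtilde (p : Fin d.r) (w : V ≃ₗᵢ[ℝ] V) (s : ℂ) : ℂ :=
  ∏ᶠ v ∈ d.frakW p \ {w}, d.Qfactor p v s

/-- The polynomial `Q_p(s)` (product of the `Qfactor`s over all `v ∈ 𝔚_p`). -/
def Qp (p : Fin d.r) (s : ℂ) : ℂ := ∏ᶠ v ∈ d.frakW p, d.Qfactor p v s

/-- The entire function `X_p(s) = Σ_{w ∈ 𝔚_p} Q̃_{p,w}(s) X̃_{p,w}(s)`. -/
def Xp (p : Fin d.r) (s : ℂ) : ℂ := ∑ᶠ w ∈ d.frakW p, d.Qtilde p w s * d.Xtilde p w s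

/-- `X_{p,w}(s) = ∏_{α ∈ Φ⁺ \ Φ_p⁺} ξ(⟨λ_p,α^∨⟩ s + ht α^∨ + δ_{α,w})`. -/
def Xpw (p : Fin d.r) (w : V ≃ₗᵢ[ℝ] V) (s : ℂ) : ℂ :=
  ∏ α ∈ d.Pos \ d.PhiPpos p,
    xi ((⟪d.fw p, coroot V α⟫ : ℂ) * s + (d.ht α : ℂ) + (d.deltaIdx w α : ℂ))

/-- The constant `C_{p,w} = ξ(2)^{|Δ_p ∩ w⁻¹Φ⁺|} ∏_{α ∈ Φ_p⁺ \ Δ_p} ξ(ht α^∨ + δ_{α,w})`. -/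
def Cpw (p : Fin d.r) (w : V ≃ₗᵢ[ℝ] V) : ℂ :=
  xi 2 ^ ((d.DeltaPFin p).filter (fun α => w α ∈ d.Pos)).card *
  ∏ α ∈ (d.PhiPpos p).filter (fun α => α ∉ d.DeltaP p),
    xi ((d.ht α : ℂ) + (d.deltaIdx w α : ℂ))

/-- `Q_{p,w}(s) = C_{p,w} Q̃_{p,w}(s)`. -/
def Qpw (p : Fin d.r) (w : V ≃ₗᵢ[ℝ] V) (s : ℂ) : ℂ := d.Cpw p w * d.Qtilde p w s

/-- `𝔚_p⁺ = {w ∈ 𝔚_p : l_p(w) < |Φ⁺ \ Φ_p⁺| / 2}`. -/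
def frakWplus (p : Fin d.r) : Set (V ≃ₗᵢ[ℝ] V) :=
  {w ∈ d.frakW p | 2 * d.lp p w < (d.Pos \ d.PhiPpos p).card}

/-- `𝔚_p⁰ = {w ∈ 𝔚_p : l_p(w) = |Φ⁺ \ Φ_p⁺| / 2}`. -/
def frakWzero (p : Fin d.r) : Set (V ≃ₗᵢ[ℝ] V) :=
  {w ∈ d.frakW p | 2 * d.lp p w = (d.Pos \ d.PhiPpos p).card}

/-- `𝔚_p‡ = {w ∈ 𝔚_p : l_p(w) = 0}`. -/
def frakWdag (p : Fin d.r) : Set (V ≃ₗᵢ[ℝ] V) :=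
  {w ∈ d.frakW p | d.lp p w = 0}

/-- `E_p(s) = Σ_{w ∈ 𝔚_p⁺} Q_{p,w}(s) X_{p,w}(s) + (1/2) Σ_{w ∈ 𝔚_p⁰} Q_{p,w}(s) X_{p,w}(s)`. -/
def Ep (p : Fin d.r) (s : ℂ) : ℂ :=
  (∑ᶠ w ∈ d.frakWplus p, d.Qpw p w s * d.Xpw p w s) +
    (2 : ℂ)⁻¹ * ∑ᶠ w ∈ d.frakWzero p, d.Qpw p w s * d.Xpw p w s

end RootSystemData

end Weng


namespace Weng

section Aux
variable {V : Type} [NormedAddCommGroup V] [InnerProductSpace ℝ V] [FiniteDimensional ℝ V]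

lemma srefl_apply (α : V) (β : V) :
    srefl V α β = β - ⟪β, coroot V α⟫ • α := by
  unfold srefl coroot
  rw [Submodule.reflection_apply, Submodule.starProjection_orthogonal_val,
    Submodule.starProjection_singleton, real_inner_smul_right, real_inner_comm β α,
    real_inner_self_eq_norm_sq]
  have h : ((‖α‖:ℝ)^2 : ℝ) = ⟪α,α⟫ := (real_inner_self_eq_norm_sq α).symm
  simp only [RCLike.ofReal_real_eq_id, id_eq]
  rw [two_smul]
  module

lemma coroot_neg (α : V) : coroot V (-α) = - coroot V α := by
  unfold coroot; rw [inner_neg_neg, smul_neg]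

lemma coroot_isom (u : V ≃ₗᵢ[ℝ] V) (α : V) : coroot V (u α) = u (coroot V α) := by
  unfold coroot
  rw [LinearIsometryEquiv.inner_map_map, LinearIsometryEquiv.map_smul]

lemma inner_coroot_isom (u : V ≃ₗᵢ[ℝ] V) (α x : V) :
    ⟪x, coroot V (u α)⟫ = ⟪u.symm x, coroot V α⟫ := by
  rw [coroot_isom, ← u.inner_map_map (u.symm x), u.apply_symm_apply]

lemma inner_coroot_eq (α x : V) : ⟪x, coroot V α⟫ = 2 / ⟪α,α⟫ * ⟪x, α⟫ := by
  unfold coroot; rw [real_inner_smul_right]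

lemma inner_self_pos' (α : V) (hα : α ≠ 0) : 0 < ⟪α, α⟫ := by
  rw [real_inner_self_eq_norm_sq]
  have := norm_pos_iff.mpr hα
  positivity

variable (d : RootSystemData V)

namespace RootSystemData

lemma phi_ne_zero {α : V} (hα : α ∈ d.Φ) : α ≠ 0 := fun h => d.hzero (h ▸ hα)

lemma pos_sub_phi {α : V} (hα : α ∈ d.Pos) : α ∈ d.Φ := d.hPosSub hα

lemma delta_mem_phi (j : Fin d.r) : d.Δ j ∈ d.Φ := d.pos_sub_phi (d.hΔPos j)

lemma delta_ne_zero (j : Fin d.r) : d.Δ j ≠ 0 := d.phi_ne_zero (d.delta_mem_phi j)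

lemma inner_delta_self_pos (j : Fin d.r) : 0 < ⟪d.Δ j, d.Δ j⟫ := by
  rw [real_inner_self_eq_norm_sq]
  have := norm_pos_iff.mpr (d.delta_ne_zero j)
  positivity

lemma inner_fw_delta (i j : Fin d.r) :
    ⟪d.fw i, d.Δ j⟫ = if i = j then ⟪d.Δ j, d.Δ j⟫ / 2 else 0 := by
  have h := d.hfw i j
  rw [inner_coroot_eq] at h
  have h2 : ⟪d.Δ j, d.Δ j⟫ ≠ 0 := (d.inner_delta_self_pos j).ne'
  split_ifs with he <;> simp only [he, if_pos, if_neg, ite_true, ite_false] at h ⊢ <;>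
    field_simp at h <;> linarith [h]

lemma inner_fw_combo (i : Fin d.r) (c : Fin d.r → ℕ) :
    ⟪d.fw i, ∑ j, (c j : ℝ) • d.Δ j⟫ = (c i : ℝ) * (⟪d.Δ i, d.Δ i⟫ / 2) := by
  rw [inner_sum]
  rw [Finset.sum_eq_single i]
  · rw [real_inner_smul_right, d.inner_fw_delta i i, if_pos rfl]
  · intro b _ hb
    rw [real_inner_smul_right, d.inner_fw_delta i b, if_neg (Ne.symm hb), mul_zero]
  · intro h; exact absurd (Finset.mem_univ i) h

lemma pos_fw_nonneg {β : V} (hβ : β ∈ d.Pos) (i : Fin d.r) : 0 ≤ ⟪d.fw i, β⟫ := by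
  obtain ⟨c, rfl⟩ := d.hPosComb β hβ
  rw [d.inner_fw_combo]
  have := d.inner_delta_self_pos i
  have : (0:ℝ) ≤ ⟪d.Δ i, d.Δ i⟫/2 := by linarith
  exact mul_nonneg (Nat.cast_nonneg _) this

lemma pos_fw_not_all_zero {β : V} (hβ : β ∈ d.Pos) (h : ∀ i, ⟪d.fw i, β⟫ ≤ 0) : False := by
  obtain ⟨c, rfl⟩ := d.hPosComb β hβ
  have hc : ∀ i, c i = 0 := by
    intro i
    have := h i
    rw [d.inner_fw_combo] at this
    have hp := d.inner_delta_self_pos i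
    have h0 : (c i : ℝ) = 0 := by
      rcases mul_eq_zero.mp (le_antisymm this
        (mul_nonneg (Nat.cast_nonneg _) (by linarith))) with h' | h'
      · exact h'
      · exfalso; linarith
    exact_mod_cast h0
  have : (∑ j, ((c j : ℝ)) • d.Δ j) = 0 := by
    apply Finset.sum_eq_zero; intro j _; rw [hc j]; simp
  exact d.hzero (this ▸ d.pos_sub_phi hβ)

lemma neg_mem_phi {α : V} (hα : α ∈ d.Φ) : -α ∈ d.Φ := by
  rcases d.hPosDec α hα with ⟨h1, _⟩ | ⟨_, h2⟩
  · exact d.hNegSub α h1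
  · exact d.pos_sub_phi h2

lemma pos_or_neg {α : V} (hα : α ∈ d.Φ) : α ∈ d.Pos ∨ -α ∈ d.Pos := by
  rcases d.hPosDec α hα with ⟨h1, _⟩ | ⟨_, h2⟩
  · exact Or.inl h1
  · exact Or.inr h2

lemma neg_not_pos {α : V} (hα : α ∈ d.Pos) : -α ∉ d.Pos := by
  rcases d.hPosDec α (d.pos_sub_phi hα) with ⟨_, h⟩ | ⟨h, _⟩
  · exact h
  · exact absurd hα h

lemma pos_of_fw_nonneg {β : V} (hβ : β ∈ d.Φ) (h : ∀ i, 0 ≤ ⟪d.fw i, β⟫) : β ∈ d.Pos := by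
  rcases d.pos_or_neg hβ with h1 | h2
  · exact h1
  · exact absurd (fun i => by rw [inner_neg_right]; linarith [h i]) (d.pos_fw_not_all_zero h2)

lemma pos_of_fw_pos {β : V} (hβ : β ∈ d.Φ) (i : Fin d.r) (h : 0 < ⟪d.fw i, β⟫) :
    β ∈ d.Pos := by
  rcases d.pos_or_neg hβ with h1 | h2
  · exact h1
  · have := d.pos_fw_nonneg h2 i
    rw [inner_neg_right] at this
    linarith

lemma pos_eq_delta_of_support {β : V} (hβ : β ∈ d.Pos) (j : Fin d.r)
    (h : ∀ i, i ≠ j → ⟪d.fw i, β⟫ = 0) : β = d.Δ j := by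
  obtain ⟨c, hc⟩ := d.hPosComb β hβ
  have hci : ∀ i, i ≠ j → c i = 0 := by
    intro i hi
    have := h i hi
    rw [hc, d.inner_fw_combo] at this
    have hp := d.inner_delta_self_pos i
    have : (c i : ℝ) = 0 := by nlinarith
    exact_mod_cast this
  have hβj : β = (c j : ℝ) • d.Δ j := by
    rw [hc, Finset.sum_eq_single j]
    · intro b _ hb; rw [hci b hb]; simp
    · intro h'; exact absurd (Finset.mem_univ j) h'
  have := d.hreduced (d.Δ j) (d.delta_mem_phi j) (c j) (by
    rw [← hβj]; exact_mod_cast d.pos_sub_phi hβ)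
  rcases this with h1 | h1
  · rw [hβj, h1, one_smul]
  · exfalso
    have : (0:ℝ) ≤ (c j : ℝ) := Nat.cast_nonneg _
    rw [h1] at this; linarith

lemma srefl_mem_phi (j : Fin d.r) {α : V} (hα : α ∈ d.Φ) : srefl V (d.Δ j) α ∈ d.Φ := by
  rw [srefl_apply]
  exact d.hrefl (d.Δ j) (d.delta_mem_phi j) α hα

lemma symm_maps_of_maps {S : Finset V} (w : V ≃ₗᵢ[ℝ] V) (h : ∀ α ∈ S, w α ∈ S) :
    ∀ α ∈ S, w.symm α ∈ S := by
  classical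
  have himg : S.image (fun a => w a) = S := by
    apply Finset.eq_of_subset_of_card_le
    · intro b hb
      obtain ⟨a, ha, rfl⟩ := Finset.mem_image.mp hb
      exact h a ha
    · rw [Finset.card_image_of_injective _ w.injective]
  intro α hα
  rw [← himg] at hα
  obtain ⟨a, ha, rfl⟩ := Finset.mem_image.mp hα
  simpa using ha

lemma inv_apply (w : V ≃ₗᵢ[ℝ] V) (x : V) : (w⁻¹) x = w.symm x := rfl

lemma mul_apply (w u : V ≃ₗᵢ[ℝ] V) (x : V) : (w * u) x = w (u x) := rfl

lemma W_maps_phi {w : V ≃ₗᵢ[ℝ] V} (hw : w ∈ d.W) : ∀ α ∈ d.Φ, w α ∈ d.Φ := by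
  induction hw using Subgroup.closure_induction with
  | mem x hx =>
    obtain ⟨j, rfl⟩ := hx
    exact fun α hα => d.srefl_mem_phi j hα
  | one => exact fun α hα => hα
  | mul x y hx hy ihx ihy => exact fun α hα => ihx _ (ihy α hα)
  | inv x hx ihx => exact fun α hα => symm_maps_of_maps x ihx α hα

lemma Wp_le_W (p : Fin d.r) : d.Wp p ≤ d.W := by
  apply Subgroup.closure_le _ |>.mpr
  intro x hx
  obtain ⟨j, _, rfl⟩ := hx
  exact Subgroup.subset_closure ⟨j, rfl⟩

lemma Wp_fixes (p : Fin d.r) {x : V} (hx : ∀ j, j ≠ p → ⟪x, d.Δ j⟫ = 0)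
    {w : V ≃ₗᵢ[ℝ] V} (hw : w ∈ d.Wp p) : w x = x := by
  induction hw using Subgroup.closure_induction with
  | mem u hu =>
    obtain ⟨j, hj, rfl⟩ := hu
    rw [srefl_apply, inner_coroot_eq, hx j hj, mul_zero, zero_smul, sub_zero]
  | one => rfl
  | mul u v hu hv ihu ihv => rw [mul_apply, ihv, ihu]
  | inv u hu ihu =>
    rw [inv_apply]
    conv_lhs => rw [← ihu]
    exact u.symm_apply_apply x

lemma fw_fixed_by_Wp (p : Fin d.r) {w : V ≃ₗᵢ[ℝ] V} (hw : w ∈ d.Wp p) :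
    w (d.fw p) = d.fw p := by
  apply d.Wp_fixes p _ hw
  intro j hj
  rw [d.inner_fw_delta, if_neg (Ne.symm hj)]

lemma eq_zero_of_inner_delta_zero {v : V} (hv : ∀ j, ⟪v, d.Δ j⟫ = 0) : v = 0 := by
  have hΦ : (d.Φ : Set V) ⊆ Submodule.span ℝ (Set.range d.Δ) := by
    intro α hα
    have key : ∀ β ∈ d.Pos, (β : V) ∈ Submodule.span ℝ (Set.range d.Δ) := by
      intro β hβ
      obtain ⟨c, rfl⟩ := d.hPosComb β hβ
      exact Submodule.sum_mem _ fun j _ =>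
        Submodule.smul_mem _ _ (Submodule.subset_span ⟨j, rfl⟩)
    rcases d.pos_or_neg (by exact_mod_cast hα) with h1 | h2
    · exact key α h1
    · have := key _ h2
      simpa using Submodule.neg_mem _ this
  have hspan' : Submodule.span ℝ (Set.range d.Δ) = ⊤ := by
    rw [eq_top_iff, ← d.hspan]
    exact Submodule.span_le.mpr hΦ
  have hvmem : v ∈ (Submodule.span ℝ (Set.range d.Δ))ᗮ := by
    rw [Submodule.mem_orthogonal]
    intro u hu
    induction hu using Submodule.span_induction with
    | mem x hx => obtain ⟨j, rfl⟩ := hx; rw [real_inner_comm]; exact hv j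
    | zero => exact inner_zero_left v
    | add x y _ _ ihx ihy => rw [inner_add_left, ihx, ihy, add_zero]
    | smul a x _ ihx => rw [inner_smul_left, ihx, mul_zero]
  rw [hspan', Submodule.top_orthogonal_eq_bot] at hvmem
  exact hvmem

lemma srefl_srefl (α β : V) : srefl V α (srefl V α β) = β := Submodule.reflection_reflection _ _

lemma inner_coroot_self (α : V) (hα : α ≠ 0) : ⟪α, coroot V α⟫ = 2 := by
  have hp : 0 < ⟪α, α⟫ := by
    rw [real_inner_self_eq_norm_sq]
    have := norm_pos_iff.mpr hα
    positivity
  rw [inner_coroot_eq, div_mul_cancel₀ _ hp.ne']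

lemma srefl_delta_self (j : Fin d.r) : srefl V (d.Δ j) (d.Δ j) = -(d.Δ j) := by
  rw [srefl_apply, inner_coroot_self _ (d.delta_ne_zero j), two_smul]
  abel

lemma mem_span_deltaP_of_pos {p : Fin d.r} {β : V} (hβ : β ∈ d.Pos)
    (hp : ⟪d.fw p, β⟫ = 0) : β ∈ Submodule.span ℝ (d.DeltaP p) := by
  obtain ⟨c, rfl⟩ := d.hPosComb β hβ
  have hcp : (c p : ℝ) = 0 := by
    rw [d.inner_fw_combo] at hp
    have := d.inner_delta_self_pos p
    rcases mul_eq_zero.mp hp with h | h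
    · exact h
    · exfalso; rw [div_eq_zero_iff] at h; rcases h with h | h <;> linarith
  refine Submodule.sum_mem _ fun j _ => ?_
  by_cases hj : j = p
  · subst hj; rw [hcp, zero_smul]; exact Submodule.zero_mem _
  · exact Submodule.smul_mem _ _ (Submodule.subset_span ⟨j, hj, rfl⟩)

lemma inner_fw_eq_zero_of_mem_span {p : Fin d.r} {β : V}
    (hβ : β ∈ Submodule.span ℝ (d.DeltaP p)) : ⟪d.fw p, β⟫ = 0 := by
  induction hβ using Submodule.span_induction with
  | mem x hx =>
    obtain ⟨j, hj, rfl⟩ := hx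
    rw [d.inner_fw_delta, if_neg (fun h => hj h.symm)]
  | zero => exact inner_zero_right _
  | add x y _ _ ihx ihy => rw [inner_add_right, ihx, ihy, add_zero]
  | smul a x _ ihx => rw [real_inner_smul_right, ihx, mul_zero]

lemma mem_phiP_iff {p : Fin d.r} {α : V} (hα : α ∈ d.Φ) :
    α ∈ d.PhiP p ↔ ⟪d.fw p, α⟫ = 0 := by
  constructor
  · intro h
    rw [PhiP, Finset.mem_filter] at h
    exact d.inner_fw_eq_zero_of_mem_span h.2
  · intro h
    rw [PhiP, Finset.mem_filter]
    refine ⟨hα, ?_⟩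
    rcases d.pos_or_neg hα with h1 | h2
    · exact d.mem_span_deltaP_of_pos h1 h
    · have := d.mem_span_deltaP_of_pos h2 (by rw [inner_neg_right, h, neg_zero])
      simpa using Submodule.neg_mem _ this

lemma mem_phiPpos_iff {p : Fin d.r} {α : V} :
    α ∈ d.PhiPpos p ↔ α ∈ d.Pos ∧ ⟪d.fw p, α⟫ = 0 := by
  rw [PhiPpos, Finset.mem_inter]
  constructor
  · rintro ⟨h1, h2⟩
    exact ⟨h1, (d.mem_phiP_iff (d.pos_sub_phi h1)).mp h2⟩
  · rintro ⟨h1, h2⟩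
    exact ⟨h1, (d.mem_phiP_iff (d.pos_sub_phi h1)).mpr h2⟩

lemma srefl_pos_of_ne (j : Fin d.r) {β : V} (hβ : β ∈ d.Pos) (hne : β ≠ d.Δ j) :
    srefl V (d.Δ j) β ∈ d.Pos := by
  have hγΦ : srefl V (d.Δ j) β ∈ d.Φ := d.srefl_mem_phi j (d.pos_sub_phi hβ)
  have hfwi : ∀ i, i ≠ j → ⟪d.fw i, srefl V (d.Δ j) β⟫ = ⟪d.fw i, β⟫ := by
    intro i hi
    rw [srefl_apply, inner_sub_right, real_inner_smul_right, d.inner_fw_delta,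
      if_neg hi, mul_zero, sub_zero]
  by_contra hγ
  rcases d.pos_or_neg hγΦ with h1 | h2
  · exact hγ h1
  have hz : ∀ i, i ≠ j → ⟪d.fw i, β⟫ = 0 := by
    intro i hi
    have h3 := d.pos_fw_nonneg h2 i
    rw [inner_neg_right, hfwi i hi] at h3
    have h4 := d.pos_fw_nonneg hβ i
    linarith
  exact hne (d.pos_eq_delta_of_support hβ j hz)

lemma srefl_ne_delta (j : Fin d.r) {β : V} (hβ : β ∈ d.Pos) :
    srefl V (d.Δ j) β ≠ d.Δ j := by
  intro h
  have h2 := congrArg (srefl V (d.Δ j)) h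
  rw [srefl_srefl, d.srefl_delta_self] at h2
  exact d.neg_not_pos (d.hΔPos j) (h2 ▸ hβ)

lemma sum_srefl_erase (j : Fin d.r) (S : Finset V)
    (hS : ∀ β ∈ S.erase (d.Δ j), srefl V (d.Δ j) β ∈ S.erase (d.Δ j)) :
    ∑ β ∈ S.erase (d.Δ j), srefl V (d.Δ j) β = ∑ β ∈ S.erase (d.Δ j), β := by
  apply Finset.sum_nbij' (i := fun β => srefl V (d.Δ j) β) (j := fun β => srefl V (d.Δ j) β)
  · exact hS
  · exact hS
  · intro a _; exact srefl_srefl _ _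
  · intro a _; exact srefl_srefl _ _
  · intro a _; rfl

lemma inner_rho_coroot (j : Fin d.r) : ⟪d.rho, coroot V (d.Δ j)⟫ = 1 := by
  have h2 : srefl V (d.Δ j) d.rho = d.rho - d.Δ j := by
    rw [rho, map_smul, map_sum]
    have herase : ∀ β ∈ d.Pos.erase (d.Δ j), srefl V (d.Δ j) β ∈ d.Pos.erase (d.Δ j) := by
      intro β hβ
      rw [Finset.mem_erase] at hβ ⊢
      exact ⟨d.srefl_ne_delta j hβ.2, d.srefl_pos_of_ne j hβ.2 hβ.1⟩
    have hsum : ∑ α ∈ d.Pos, srefl V (d.Δ j) α = (∑ α ∈ d.Pos, α) - (2:ℝ) • d.Δ j := by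
      rw [← Finset.add_sum_erase _ _ (d.hΔPos j), ← Finset.add_sum_erase _ (fun x => x) (d.hΔPos j),
        d.sum_srefl_erase j d.Pos herase, d.srefl_delta_self j, two_smul]
      abel
    rw [hsum, smul_sub, smul_smul]
    norm_num
  rw [srefl_apply] at h2
  have h4 : ⟪d.rho, coroot V (d.Δ j)⟫ • d.Δ j = (1:ℝ) • d.Δ j := by
    rw [one_smul]; exact sub_right_inj.mp h2
  have h3 : (⟪d.rho, coroot V (d.Δ j)⟫ - 1) • d.Δ j = 0 := by
    rw [sub_smul, h4, one_smul, sub_self]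
  rcases smul_eq_zero.mp h3 with h | h
  · linarith [h]
  · exact absurd h (d.delta_ne_zero j)

lemma delta_mem_phiPpos {p : Fin d.r} (j : Fin d.r) (hj : j ≠ p) :
    d.Δ j ∈ d.PhiPpos p := by
  rw [d.mem_phiPpos_iff]
  exact ⟨d.hΔPos j, by rw [d.inner_fw_delta, if_neg (fun h => hj h.symm)]⟩

lemma srefl_phiPpos (p : Fin d.r) (j : Fin d.r) (hj : j ≠ p) {β : V}
    (hβ : β ∈ d.PhiPpos p) (hne : β ≠ d.Δ j) : srefl V (d.Δ j) β ∈ d.PhiPpos p := by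
  rw [d.mem_phiPpos_iff] at hβ ⊢
  refine ⟨d.srefl_pos_of_ne j hβ.1 hne, ?_⟩
  rw [srefl_apply, inner_sub_right, real_inner_smul_right, d.inner_fw_delta,
    if_neg (fun h => hj h.symm), mul_zero, sub_zero]
  exact hβ.2

lemma inner_rhoP_coroot (p : Fin d.r) (j : Fin d.r) (hj : j ≠ p) :
    ⟪d.rhoP p, coroot V (d.Δ j)⟫ = 1 := by
  have h2 : srefl V (d.Δ j) (d.rhoP p) = d.rhoP p - d.Δ j := by
    rw [rhoP, map_smul, map_sum]
    have herase : ∀ β ∈ (d.PhiPpos p).erase (d.Δ j),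
        srefl V (d.Δ j) β ∈ (d.PhiPpos p).erase (d.Δ j) := by
      intro β hβ
      rw [Finset.mem_erase] at hβ ⊢
      have hβpos : β ∈ d.Pos := (d.mem_phiPpos_iff.mp hβ.2).1
      exact ⟨d.srefl_ne_delta j hβpos, d.srefl_phiPpos p j hj hβ.2 hβ.1⟩
    have hsum : ∑ α ∈ d.PhiPpos p, srefl V (d.Δ j) α
        = (∑ α ∈ d.PhiPpos p, α) - (2:ℝ) • d.Δ j := by
      rw [← Finset.add_sum_erase _ _ (d.delta_mem_phiPpos j hj),
        ← Finset.add_sum_erase _ (fun x => x) (d.delta_mem_phiPpos j hj),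
        d.sum_srefl_erase j _ herase, d.srefl_delta_self j, two_smul]
      abel
    rw [hsum, smul_sub, smul_smul]
    norm_num
  rw [srefl_apply] at h2
  have h4 : ⟪d.rhoP p, coroot V (d.Δ j)⟫ • d.Δ j = (1:ℝ) • d.Δ j := by
    rw [one_smul]; exact sub_right_inj.mp h2
  have h3 : (⟪d.rhoP p, coroot V (d.Δ j)⟫ - 1) • d.Δ j = 0 := by
    rw [sub_smul, h4, one_smul, sub_self]
  rcases smul_eq_zero.mp h3 with h | h
  · linarith [h]
  · exact absurd h (d.delta_ne_zero j)

lemma rho_sub_rhoP (p : Fin d.r) : d.rho - d.rhoP p = (d.cp p / 2) • d.fw p := by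
  have hτ : d.cp p / 2 = ⟪d.rho - d.rhoP p, coroot V (d.Δ p)⟫ := by
    rw [cp, inner_sub_left, inner_sub_left, d.inner_rho_coroot p, d.hfw p p, if_pos rfl]
    ring
  have hvz : d.rho - d.rhoP p - (d.cp p / 2) • d.fw p = 0 := by
    apply d.eq_zero_of_inner_delta_zero
    intro j
    have hco : ⟪d.rho - d.rhoP p - (d.cp p / 2) • d.fw p, coroot V (d.Δ j)⟫ = 0 := by
      by_cases hj : j = p
      · rw [hj, inner_sub_left, inner_sub_left, real_inner_smul_left, d.hfw p p,
          if_pos rfl]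
        rw [inner_sub_left] at hτ
        linarith
      · rw [inner_sub_left, inner_sub_left, real_inner_smul_left,
          d.inner_rho_coroot j, d.inner_rhoP_coroot p j hj, d.hfw p j,
          if_neg (fun h => hj h.symm)]
        ring
    rw [inner_coroot_eq] at hco
    have hne : (2:ℝ) / ⟪d.Δ j, d.Δ j⟫ ≠ 0 := by
      have := d.inner_delta_self_pos j
      positivity
    exact (mul_eq_zero.mp hco).resolve_left hne
  exact sub_eq_zero.mp hvz

lemma key_identity (p : Fin d.r) (x : V) :
    2 * ⟪d.rho - d.rhoP p, x⟫ = d.cp p * ⟪d.fw p, x⟫ := by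
  rw [d.rho_sub_rhoP p, real_inner_smul_left]
  ring

lemma sub_mem_phi {α β : V} (hα : α ∈ d.Φ) (hβ : β ∈ d.Φ) (hne : α ≠ β)
    (hpos : 0 < ⟪α, β⟫) : α - β ∈ d.Φ := by
  have hαz : α ≠ 0 := d.phi_ne_zero hα
  have hβz : β ≠ 0 := d.phi_ne_zero hβ
  have hαα : 0 < ⟪α, α⟫ := inner_self_pos' α hαz
  have hββ : 0 < ⟪β, β⟫ := inner_self_pos' β hβz
  have ha' : ⟪α, coroot V β⟫ = 2 / ⟪β, β⟫ * ⟪α, β⟫ := inner_coroot_eq β α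
  have hb' : ⟪β, coroot V α⟫ = 2 / ⟪α, α⟫ * ⟪β, α⟫ := inner_coroot_eq α β
  by_cases hA : ⟪α, coroot V β⟫ = 1
  · have := d.hrefl β hβ α hα
    rw [hA, one_smul] at this
    exact this
  by_cases hB : ⟪β, coroot V α⟫ = 1
  · have := d.hrefl α hα β hβ
    rw [hB, one_smul] at this
    have h2 := d.neg_mem_phi this
    rw [neg_sub] at h2
    exact h2
  exfalso
  obtain ⟨a, ha⟩ := d.hcrys β hβ α hα
  obtain ⟨b, hb⟩ := d.hcrys α hα β hβ
  have hpos' : 0 < ⟪β, α⟫ := by rw [real_inner_comm]; exact hpos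
  have hapos : (0:ℝ) < a := by
    rw [← ha, ha']
    exact mul_pos (by positivity) hpos
  have hbpos : (0:ℝ) < b := by
    rw [← hb, hb']
    exact mul_pos (by positivity) hpos'
  have ha2 : (2:ℝ) ≤ a := by
    have h1 : (1:ℤ) ≤ a := by exact_mod_cast hapos
    have h2 : a ≠ 1 := fun h => hA (by rw [ha, h]; norm_num)
    have : (2:ℤ) ≤ a := by omega
    exact_mod_cast this
  have hb2 : (2:ℝ) ≤ b := by
    have h1 : (1:ℤ) ≤ b := by exact_mod_cast hbpos
    have h2 : b ≠ 1 := fun h => hB (by rw [hb, h]; norm_num)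
    have : (2:ℤ) ≤ b := by omega
    exact_mod_cast this
  have hcs : ⟪α, β⟫ * ⟪α, β⟫ ≤ ⟪α, α⟫ * ⟪β, β⟫ := real_inner_mul_inner_self_le α β
  have hab : (a:ℝ) * b = 4 * (⟪α, β⟫ * ⟪α, β⟫) / (⟪α, α⟫ * ⟪β, β⟫) := by
    rw [← ha, ← hb, ha', hb', real_inner_comm β α]
    field_simp
    ring
  have heq : ⟪α, β⟫ * ⟪α, β⟫ = ⟪α, α⟫ * ⟪β, β⟫ := by
    have h4 : (4:ℝ) ≤ a * b := by nlinarith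
    rw [hab] at h4
    have hden : 0 < ⟪α, α⟫ * ⟪β, β⟫ := by positivity
    have h5 := (le_div_iff₀ hden).mp h4
    nlinarith [h5, hcs]
  have hu : ⟪β, β⟫ • α - ⟪α, β⟫ • β = 0 := by
    have hin : ⟪⟪β, β⟫ • α - ⟪α, β⟫ • β, ⟪β, β⟫ • α - ⟪α, β⟫ • β⟫ = 0 := by
      simp only [inner_sub_left, inner_sub_right, real_inner_smul_left,
        real_inner_smul_right]
      rw [real_inner_comm β α]
      have heq' : ⟪β, α⟫ * ⟪β, α⟫ = ⟪α, α⟫ * ⟪β, β⟫ := by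
        rw [real_inner_comm β α] at heq; exact heq
      linear_combination (-(⟪β, β⟫)) * heq'
    exact inner_self_eq_zero.mp hin
  have hαβ : α = (⟪α, β⟫ / ⟪β, β⟫) • β := by
    have := sub_eq_zero.mp hu
    rw [div_eq_mul_inv, mul_comm, mul_smul, ← this, smul_smul,
      inv_mul_cancel₀ hββ.ne', one_smul]
  have ht := d.hreduced β hβ (⟪α, β⟫ / ⟪β, β⟫) (by rw [← hαβ]; exact_mod_cast hα)
  have htpos : 0 < ⟪α, β⟫ / ⟪β, β⟫ := by positivity
  rcases ht with h | h
  · rw [h, one_smul] at hαβ; exact hne hαβ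
  · rw [h] at htpos; linarith

lemma pos_decomp {α : V} (hα : α ∈ d.Pos) (hns : ∀ j, α ≠ d.Δ j) :
    ∃ β γ, β ∈ d.Pos ∧ γ ∈ d.Pos ∧ α = β + γ := by
  obtain ⟨c, hc⟩ := d.hPosComb α hα
  have hself : 0 < ⟪α, α⟫ := inner_self_pos' α (d.phi_ne_zero (d.pos_sub_phi hα))
  have hexj : ∃ j, 0 < (c j : ℝ) * ⟪α, d.Δ j⟫ := by
    by_contra hcon
    push_neg at hcon
    have : ⟪α, α⟫ ≤ 0 := by
      nth_rewrite 2 [hc]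
      rw [inner_sum]
      refine Finset.sum_nonpos fun j _ => ?_
      rw [real_inner_smul_right]
      exact hcon j
    linarith
  obtain ⟨j, hj⟩ := hexj
  have hcj : 0 < c j := by
    rcases Nat.eq_zero_or_pos (c j) with h | h
    · rw [h] at hj; simp at hj
    · exact h
  have hip : 0 < ⟪α, d.Δ j⟫ := by
    rcases lt_trichotomy ⟪α, d.Δ j⟫ 0 with h | h | h
    · nlinarith [Nat.cast_nonneg (α := ℝ) (c j)]
    · rw [h, mul_zero] at hj; linarith
    · exact h
  have hsub : α - d.Δ j ∈ d.Φ :=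
    d.sub_mem_phi (d.pos_sub_phi hα) (d.delta_mem_phi j) (hns j) hip
  have hsubpos : α - d.Δ j ∈ d.Pos := by
    apply d.pos_of_fw_nonneg hsub
    intro i
    rw [inner_sub_right]
    by_cases hij : i = j
    · subst hij
      rw [hc, d.inner_fw_combo, d.inner_fw_delta, if_pos rfl]
      have h1 : (1:ℝ) ≤ (c i : ℝ) := by exact_mod_cast hcj
      nlinarith [d.inner_delta_self_pos i]
    · rw [d.inner_fw_delta, if_neg hij, sub_zero]
      exact d.pos_fw_nonneg hα i
  exact ⟨α - d.Δ j, d.Δ j, hsubpos, d.hΔPos j, by abel⟩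

lemma delta_not_decomp (j : Fin d.r) {β γ : V} (hβ : β ∈ d.Pos) (hγ : γ ∈ d.Pos)
    (h : d.Δ j = β + γ) : False := by
  have hβj : β = d.Δ j := by
    apply d.pos_eq_delta_of_support hβ j
    intro i hi
    have h1 := d.pos_fw_nonneg hβ i
    have h2 := d.pos_fw_nonneg hγ i
    have h3 : ⟪d.fw i, β⟫ + ⟪d.fw i, γ⟫ = 0 := by
      rw [← inner_add_right, ← h, d.inner_fw_delta, if_neg hi]
    linarith
  have hγj : γ = d.Δ j := by
    apply d.pos_eq_delta_of_support hγ j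
    intro i hi
    have h1 := d.pos_fw_nonneg hβ i
    have h2 := d.pos_fw_nonneg hγ i
    have h3 : ⟪d.fw i, β⟫ + ⟪d.fw i, γ⟫ = 0 := by
      rw [← inner_add_right, ← h, d.inner_fw_delta, if_neg hi]
    linarith
  rw [hβj, hγj] at h
  exact d.delta_ne_zero j (left_eq_add.mp h)

lemma finset_image_surj {S : Finset V} (f : V → V) (hf : Function.Injective f)
    (h : ∀ α ∈ S, f α ∈ S) : ∀ β ∈ S, ∃ α ∈ S, f α = β := by
  classical
  have himg : S.image f = S := by
    apply Finset.eq_of_subset_of_card_le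
    · intro b hb
      obtain ⟨a, ha, rfl⟩ := Finset.mem_image.mp hb
      exact h a ha
    · rw [Finset.card_image_of_injective _ hf]
  intro β hβ
  rw [← himg] at hβ
  exact Finset.mem_image.mp hβ

section LongElems

variable {a b : V ≃ₗᵢ[ℝ] V} {p : Fin d.r}

lemma w0_neg_inj : Function.Injective (fun x => -(a x)) := by
  intro x y h
  simp only [neg_inj] at h
  exact a.injective h

lemma w0_delta (haW : a ∈ d.W) (halong : ∀ α ∈ d.Pos, -(a α) ∈ d.Pos) (k : Fin d.r) :
    ∃ m, -(a (d.Δ k)) = d.Δ m := by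
  by_contra hns
  push_neg at hns
  have hβ : -(a (d.Δ k)) ∈ d.Pos := halong _ (d.hΔPos k)
  obtain ⟨x, y, hx, hy, hxy⟩ := d.pos_decomp hβ (fun j h => hns j h)
  obtain ⟨u, hu, hux⟩ := finset_image_surj (fun x => -(a x)) w0_neg_inj halong x hx
  obtain ⟨v, hv, hvy⟩ := finset_image_surj (fun x => -(a x)) w0_neg_inj halong y hy
  have : -(a (u + v)) = -(a (d.Δ k)) := by
    rw [map_add, neg_add, hux, hvy, ← hxy]
  have huv : u + v = d.Δ k := a.injective (neg_inj.mp this)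
  exact d.delta_not_decomp k hu hv huv.symm

lemma w0_pos_iff (haW : a ∈ d.W) (halong : ∀ α ∈ d.Pos, -(a α) ∈ d.Pos)
    {γ : V} (hγ : γ ∈ d.Φ) : a γ ∈ d.Pos ↔ γ ∉ d.Pos := by
  constructor
  · intro h hpos
    exact d.neg_not_pos h (halong γ hpos)
  · intro h
    rcases d.pos_or_neg hγ with h1 | h2
    · exact absurd h1 h
    · have := halong _ h2
      rw [map_neg, neg_neg] at this
      exact this

lemma mem_deltaP_iff {x : V} : x ∈ d.DeltaP p ↔ ∃ k, k ≠ p ∧ d.Δ k = x := by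
  unfold DeltaP
  constructor
  · rintro ⟨k, hk, rfl⟩; exact ⟨k, hk, rfl⟩
  · rintro ⟨k, hk, rfl⟩; exact ⟨k, hk, rfl⟩

lemma mem_deltaPFin_iff {x : V} : x ∈ d.DeltaPFin p ↔ ∃ k, k ≠ p ∧ d.Δ k = x := by
  unfold DeltaPFin
  rw [Finset.mem_image]
  constructor
  · rintro ⟨k, hk, rfl⟩
    exact ⟨k, (Finset.mem_filter.mp hk).2, rfl⟩
  · rintro ⟨k, hk, rfl⟩
    exact ⟨k, Finset.mem_filter.mpr ⟨Finset.mem_univ k, hk⟩, rfl⟩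

lemma wp_delta (hbl : ∀ j, j ≠ p → -(b (d.Δ j)) ∈ d.DeltaP p) {j : Fin d.r} (hj : j ≠ p) :
    ∃ k, k ≠ p ∧ b (d.Δ j) = -(d.Δ k) := by
  obtain ⟨k, hk, heq⟩ := d.mem_deltaP_iff.mp (hbl j hj)
  exact ⟨k, hk, by rw [heq, neg_neg]⟩

lemma wp_deltaPFin (hbl : ∀ j, j ≠ p → -(b (d.Δ j)) ∈ d.DeltaP p)
    {x : V} (hx : x ∈ d.DeltaPFin p) : -(b x) ∈ d.DeltaPFin p := by
  obtain ⟨k, hk, rfl⟩ := d.mem_deltaPFin_iff.mp hx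
  obtain ⟨m, hm, hbm⟩ := d.wp_delta hbl hk
  rw [hbm, neg_neg]
  exact d.mem_deltaPFin_iff.mpr ⟨m, hm, rfl⟩

lemma wp_symm_long (hbl : ∀ j, j ≠ p → -(b (d.Δ j)) ∈ d.DeltaP p) :
    ∀ j, j ≠ p → -(b.symm (d.Δ j)) ∈ d.DeltaP p := by
  intro j hj
  have hΔj : d.Δ j ∈ d.DeltaPFin p := d.mem_deltaPFin_iff.mpr ⟨j, hj, rfl⟩
  obtain ⟨α, hα, hba⟩ := finset_image_surj (S := d.DeltaPFin p) (fun x => -(b x))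
    w0_neg_inj (fun x hx => d.wp_deltaPFin hbl hx) _ hΔj
  have : -(b.symm (d.Δ j)) = α := by
    have h1 : b α = -(d.Δ j) := by rw [← hba]; simp
    have := congrArg b.symm h1
    rw [b.symm_apply_apply, map_neg] at this
    rw [← this]
  rw [this]
  obtain ⟨k, hk, rfl⟩ := d.mem_deltaPFin_iff.mp hα
  exact d.mem_deltaP_iff.mpr ⟨k, hk, rfl⟩

lemma inner_fw_wp (hb : b ∈ d.Wp p) (x : V) : ⟪d.fw p, b x⟫ = ⟪d.fw p, x⟫ := by
  have h : b.symm (d.fw p) = d.fw p := d.fw_fixed_by_Wp p (inv_mem hb)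
  rw [← b.symm.inner_map_map (d.fw p) (b x), b.symm_apply_apply, h]

lemma coeff_p_zero {α : V} (hα : α ∈ d.Pos) (h : ⟪d.fw p, α⟫ = 0) (c : Fin d.r → ℕ)
    (hc : α = ∑ j, (c j : ℝ) • d.Δ j) : (c p : ℝ) = 0 := by
  rw [hc, d.inner_fw_combo] at h
  rcases mul_eq_zero.mp h with h' | h'
  · exact h'
  · exfalso
    have := d.inner_delta_self_pos p
    rw [div_eq_zero_iff] at h'
    rcases h' with h' | h' <;> linarith

lemma wp_maps_phiPpos (hb : b ∈ d.Wp p) (hbl : ∀ j, j ≠ p → -(b (d.Δ j)) ∈ d.DeltaP p)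
    {α : V} (hα : α ∈ d.PhiPpos p) : -(b α) ∈ d.PhiPpos p := by
  obtain ⟨hαpos, hαfw⟩ := d.mem_phiPpos_iff.mp hα
  have hαΦ : α ∈ d.Φ := d.pos_sub_phi hαpos
  have hbαΦ : -(b α) ∈ d.Φ :=
    d.neg_mem_phi (d.W_maps_phi (d.Wp_le_W p hb) α hαΦ)
  rw [d.mem_phiPpos_iff]
  constructor
  · apply d.pos_of_fw_nonneg hbαΦ
    intro i
    obtain ⟨c, hc⟩ := d.hPosComb α hαpos
    have hcp : (c p : ℝ) = 0 := d.coeff_p_zero hαpos hαfw c hc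
    have hbsum : b α = ∑ j, (c j : ℝ) • b (d.Δ j) := by
      rw [hc, map_sum]
      exact Finset.sum_congr rfl fun j _ => by rw [map_smul]
    rw [inner_neg_right, hbsum, inner_sum, ← Finset.sum_neg_distrib]
    refine Finset.sum_nonneg fun j _ => ?_
    rw [real_inner_smul_right]
    by_cases hjp : j = p
    · rw [hjp, hcp]; simp
    · obtain ⟨k, hk, hbk⟩ := d.wp_delta hbl hjp
      rw [hbk, inner_neg_right, d.inner_fw_delta]
      have : (0:ℝ) ≤ (c j : ℝ) := Nat.cast_nonneg _
      split_ifs with h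
      · nlinarith [(d.inner_delta_self_pos k).le, (Nat.cast_nonneg (c j) : (0:ℝ) ≤ (c j : ℝ))]
      · simp
  · rw [inner_neg_right, d.inner_fw_wp hb, hαfw, neg_zero]

lemma wp_maps_posC (hb : b ∈ d.Wp p) {α : V} (hα : α ∈ d.Pos)
    (hfw : ⟪d.fw p, α⟫ ≠ 0) : b α ∈ d.Pos := by
  have h1 : 0 < ⟪d.fw p, α⟫ := lt_of_le_of_ne (d.pos_fw_nonneg hα p) (Ne.symm hfw)
  apply d.pos_of_fw_pos (d.W_maps_phi (d.Wp_le_W p hb) α (d.pos_sub_phi hα)) p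
  rw [d.inner_fw_wp hb]
  exact h1

lemma wp_rhoP (hb : b ∈ d.Wp p) (hbl : ∀ j, j ≠ p → -(b (d.Δ j)) ∈ d.DeltaP p) :
    b (d.rhoP p) = -(d.rhoP p) := by
  rw [rhoP, map_smul, map_sum]
  have hsum : ∑ α ∈ d.PhiPpos p, b α = -∑ α ∈ d.PhiPpos p, α := by
    have h1 : ∑ α ∈ d.PhiPpos p, b α = -∑ α ∈ d.PhiPpos p, -(b α) := by
      rw [Finset.sum_neg_distrib, neg_neg]
    rw [h1, neg_inj]
    apply Finset.sum_nbij' (i := fun α => -(b α)) (j := fun α => -(b.symm α))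
    · exact fun α hα => d.wp_maps_phiPpos hb hbl hα
    · exact fun α hα => d.wp_maps_phiPpos (inv_mem hb) (d.wp_symm_long hbl) hα
    · intro α _; simp
    · intro α _; simp
    · intro α _; rfl
  rw [hsum, smul_neg]

lemma wp_rho (hb : b ∈ d.Wp p) (hbl : ∀ j, j ≠ p → -(b (d.Δ j)) ∈ d.DeltaP p) :
    b d.rho = d.rho - d.rhoP p - d.rhoP p := by
  have hsplit : d.rho = (d.rho - d.rhoP p) + d.rhoP p := by abel
  have h1 : b (d.rho - d.rhoP p) = d.rho - d.rhoP p := by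
    rw [d.rho_sub_rhoP p, map_smul, d.fw_fixed_by_Wp p hb]
  calc b d.rho = b ((d.rho - d.rhoP p) + d.rhoP p) := by rw [← hsplit]
    _ = (d.rho - d.rhoP p) + -(d.rhoP p) := by rw [map_add, h1, d.wp_rhoP hb hbl]
    _ = d.rho - d.rhoP p - d.rhoP p := by abel

lemma ht_neg (α : V) : d.ht (-α) = -(d.ht α) := by
  rw [ht, ht, coroot_neg, inner_neg_right]

lemma k_neg (α : V) : ⟪d.fw p, coroot V (-α)⟫ = -⟪d.fw p, coroot V α⟫ := by
  rw [coroot_neg, inner_neg_right]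

lemma k_wp (hb : b ∈ d.Wp p) (α : V) :
    ⟪d.fw p, coroot V (b α)⟫ = ⟪d.fw p, coroot V α⟫ := by
  rw [inner_coroot_isom]
  have h : b.symm (d.fw p) = d.fw p := d.fw_fixed_by_Wp p (inv_mem hb)
  rw [h]

lemma ht_wp (hb : b ∈ d.Wp p) (hbl : ∀ j, j ≠ p → -(b (d.Δ j)) ∈ d.DeltaP p) (α : V) :
    d.ht (b α) = d.cp p * ⟪d.fw p, coroot V α⟫ - d.ht α := by
  have hsym : b.symm d.rho = d.rho - d.rhoP p - d.rhoP p :=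
    d.wp_rho (inv_mem hb) (d.wp_symm_long hbl)
  rw [ht, inner_coroot_isom, hsym, inner_sub_left, inner_sub_left, ht]
  have hk := d.key_identity p (coroot V α)
  rw [inner_sub_left] at hk
  linarith

end LongElems

section Main

variable {a b w : V ≃ₗᵢ[ℝ] V} {p : Fin d.r}

lemma mem_negS_iff {x : V} : x ∈ d.NegS ↔ -x ∈ d.Pos := by
  unfold NegS
  rw [Finset.mem_image]
  constructor
  · rintro ⟨y, hy, rfl⟩; rwa [neg_neg]
  · intro h; exact ⟨-x, h, neg_neg x⟩

lemma w0_symm_long (halong : ∀ α ∈ d.Pos, -(a α) ∈ d.Pos) :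
    ∀ α ∈ d.Pos, -(a.symm α) ∈ d.Pos := by
  intro β hβ
  obtain ⟨α, hα, heq⟩ := finset_image_surj (fun x => -(a x)) w0_neg_inj halong β hβ
  have h2 : α = -(a.symm β) := by
    have h3 : a α = -β := by rw [← heq]; simp
    have h4 := congrArg a.symm h3
    rwa [a.symm_apply_apply, map_neg] at h4
  exact h2 ▸ hα

lemma w0_symm_delta (haW : a ∈ d.W) (halong : ∀ α ∈ d.Pos, -(a α) ∈ d.Pos) (k : Fin d.r) :
    ∃ m, -(a.symm (d.Δ k)) = d.Δ m := by
  classical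
  set S : Finset V := Finset.univ.image d.Δ with hS
  have hmem : ∀ x ∈ S, -(a x) ∈ S := by
    intro x hx
    obtain ⟨i, _, rfl⟩ := Finset.mem_image.mp hx
    obtain ⟨m, hm⟩ := d.w0_delta haW halong i
    rw [hm]
    exact Finset.mem_image.mpr ⟨m, Finset.mem_univ m, rfl⟩
  obtain ⟨α, hα, hαk⟩ := finset_image_surj (fun x => -(a x)) w0_neg_inj hmem (d.Δ k)
    (Finset.mem_image.mpr ⟨k, Finset.mem_univ k, rfl⟩)
  have h5 : α = -(a.symm (d.Δ k)) := by
    have h1 : a α = -(d.Δ k) := by rw [← hαk]; simp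
    have h4 := congrArg a.symm h1
    rwa [a.symm_apply_apply, map_neg] at h4
  obtain ⟨m, _, hm⟩ := Finset.mem_image.mp hα
  exact ⟨m, by rw [← h5, ← hm]⟩

lemma triple_apply (x : V) : (a * w * b) x = a (w (b x)) := rfl

lemma delta1 (haW : a ∈ d.W) (hal : ∀ α ∈ d.Pos, -(a α) ∈ d.Pos) (hwW : w ∈ d.W)
    {γ : V} (hγ : γ ∈ d.Φ) :
    ((a * w * b) (-(b.symm γ)) ∈ d.Pos ↔ w γ ∈ d.Pos) := by
  have h1 : (a * w * b) (-(b.symm γ)) = -(a (w γ)) := by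
    rw [triple_apply, map_neg, b.apply_symm_apply, map_neg, map_neg]
  rw [h1]
  have hwγ : w γ ∈ d.Φ := d.W_maps_phi hwW γ hγ
  constructor
  · intro h
    by_contra hc
    rcases d.pos_or_neg hwγ with h2 | h2
    · exact hc h2
    · have h3 := hal _ h2
      rw [map_neg, neg_neg] at h3
      exact d.neg_not_pos h3 h
  · intro h
    exact hal _ h

lemma delta2 (haW : a ∈ d.W) (hal : ∀ α ∈ d.Pos, -(a α) ∈ d.Pos) (hwW : w ∈ d.W)
    {γ : V} (hγ : γ ∈ d.Φ) :
    ((a * w * b) (b.symm γ) ∈ d.Pos ↔ w γ ∉ d.Pos) := by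
  have h1 : (a * w * b) (b.symm γ) = a (w γ) := by
    rw [triple_apply, b.apply_symm_apply]
  rw [h1]
  have hwγ : w γ ∈ d.Φ := d.W_maps_phi hwW γ hγ
  constructor
  · intro h hc
    exact d.neg_not_pos h (hal _ hc)
  · intro h
    rcases d.pos_or_neg hwγ with h2 | h2
    · exact absurd h2 h
    · have h3 := hal _ h2
      rwa [map_neg, neg_neg] at h3

lemma frakW_closed (haW : a ∈ d.W) (hal : ∀ α ∈ d.Pos, -(a α) ∈ d.Pos)
    (hbW : b ∈ d.Wp p) (hbl : ∀ j, j ≠ p → -(b (d.Δ j)) ∈ d.DeltaP p)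
    {w : V ≃ₗᵢ[ℝ] V} (hw : w ∈ d.frakW p) : a * w * b ∈ d.frakW p := by
  obtain ⟨hwW, hwcond⟩ := hw
  refine ⟨mul_mem (mul_mem haW hwW) (d.Wp_le_W p hbW), ?_⟩
  intro j hj
  obtain ⟨k, hk, hbk⟩ := d.wp_delta hbl hj
  have happ : (a * w * b) (d.Δ j) = -(a (w (d.Δ k))) := by
    rw [triple_apply, hbk, map_neg, map_neg]
  rcases hwcond k hk with h1 | h1
  · obtain ⟨m, hm⟩ := h1
    obtain ⟨m', hm'⟩ := d.w0_delta haW hal m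
    left
    rw [happ, ← hm, hm']
    exact ⟨m', rfl⟩
  · right
    rw [d.mem_negS_iff] at h1 ⊢
    rw [happ, neg_neg]
    have h2 : a (w (d.Δ k)) = -(a (-(w (d.Δ k)))) := by rw [map_neg, neg_neg]
    rw [h2]
    exact hal _ h1

lemma xi_one_sub (z : ℂ) : xi (1 - z) = xi z := by
  unfold xi
  rw [completedRiemannZeta₀_one_sub]
  ring

end Main

section Core

variable {a b w : V ≃ₗᵢ[ℝ] V} {p : Fin d.r}

lemma hbl_inv (hbl : ∀ j, j ≠ p → -(b (d.Δ j)) ∈ d.DeltaP p) :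
    ∀ j, j ≠ p → -((b⁻¹) (d.Δ j)) ∈ d.DeltaP p := by
  intro j hj
  rw [inv_apply]
  exact d.wp_symm_long hbl j hj

lemma wp_symm_deltaPFin (hbl : ∀ j, j ≠ p → -(b (d.Δ j)) ∈ d.DeltaP p)
    {x : V} (hx : x ∈ d.DeltaPFin p) : -(b.symm x) ∈ d.DeltaPFin p := by
  have h := d.wp_deltaPFin (b := b⁻¹) (d.hbl_inv hbl) hx
  rwa [inv_apply] at h

lemma wp_symm_phiPpos (hbW : b ∈ d.Wp p) (hbl : ∀ j, j ≠ p → -(b (d.Δ j)) ∈ d.DeltaP p)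
    {α : V} (hα : α ∈ d.PhiPpos p) : -(b.symm α) ∈ d.PhiPpos p := by
  have h := d.wp_maps_phiPpos (b := b⁻¹) (inv_mem hbW) (d.hbl_inv hbl) hα
  rwa [inv_apply] at h

lemma wp_symm_posC (hbW : b ∈ d.Wp p) {α : V} (hα : α ∈ d.Pos)
    (hfw : ⟪d.fw p, α⟫ ≠ 0) : b.symm α ∈ d.Pos := by
  have h := d.wp_maps_posC (b := b⁻¹) (inv_mem hbW) hα hfw
  rwa [inv_apply] at h

lemma inner_fw_wp_symm (hbW : b ∈ d.Wp p) (x : V) :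
    ⟪d.fw p, b.symm x⟫ = ⟪d.fw p, x⟫ := by
  have h := d.inner_fw_wp (b := b⁻¹) (inv_mem hbW) x
  rwa [inv_apply] at h

lemma k_wp_symm (hbW : b ∈ d.Wp p) (α : V) :
    ⟪d.fw p, coroot V (b.symm α)⟫ = ⟪d.fw p, coroot V α⟫ := by
  have h := d.k_wp (b := b⁻¹) (inv_mem hbW) α
  rwa [inv_apply] at h

lemma ht_wp_symm (hbW : b ∈ d.Wp p) (hbl : ∀ j, j ≠ p → -(b (d.Δ j)) ∈ d.DeltaP p)
    (α : V) : d.ht (b.symm α) = d.cp p * ⟪d.fw p, coroot V α⟫ - d.ht α := by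
  have h := d.ht_wp (b := b⁻¹) (inv_mem hbW) (d.hbl_inv hbl) α
  rwa [inv_apply] at h

lemma kfw_zero_iff {α : V} (hα : α ≠ 0) :
    ⟪d.fw p, coroot V α⟫ = 0 ↔ ⟪d.fw p, α⟫ = 0 := by
  rw [inner_coroot_eq]
  have h := inner_self_pos' α hα
  constructor
  · intro hz
    rcases mul_eq_zero.mp hz with h' | h'
    · exfalso; rw [div_eq_zero_iff] at h'; rcases h' with h' | h' <;> linarith
    · exact h'
  · intro hz; rw [hz, mul_zero]

lemma deltaP_iff_deltaPFin {x : V} : x ∈ d.DeltaP p ↔ x ∈ d.DeltaPFin p := by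
  rw [d.mem_deltaP_iff, d.mem_deltaPFin_iff]

/-- The map  `α ↦ -(b.symm α)` if `⟪fw p, α⟫ = 0`, else `α ↦ b.symm α`. -/
def sigmaB (b : V ≃ₗᵢ[ℝ] V) (p : Fin d.r) (α : V) : V :=
  if ⟪d.fw p, α⟫ = 0 then -(b.symm α) else b.symm α

/-- Inverse of `sigmaB`. -/
def tauB (b : V ≃ₗᵢ[ℝ] V) (p : Fin d.r) (α : V) : V :=
  if ⟪d.fw p, α⟫ = 0 then -(b α) else b α

lemma tauB_sigmaB (hbW : b ∈ d.Wp p) (α : V) : d.tauB b p (d.sigmaB b p α) = α := by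
  unfold sigmaB tauB
  by_cases h : ⟪d.fw p, α⟫ = 0
  · rw [if_pos h, if_pos (by rw [inner_neg_right, d.inner_fw_wp_symm hbW, h, neg_zero]),
      map_neg, neg_neg, b.apply_symm_apply]
  · rw [if_neg h, if_neg (by rw [d.inner_fw_wp_symm hbW]; exact h), b.apply_symm_apply]

lemma sigmaB_tauB (hbW : b ∈ d.Wp p) (α : V) : d.sigmaB b p (d.tauB b p α) = α := by
  unfold sigmaB tauB
  by_cases h : ⟪d.fw p, α⟫ = 0
  · rw [if_pos h, if_pos (by rw [inner_neg_right, d.inner_fw_wp hbW, h, neg_zero]),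
      map_neg, neg_neg, b.symm_apply_apply]
  · rw [if_neg h, if_neg (by rw [d.inner_fw_wp hbW]; exact h), b.symm_apply_apply]

lemma sigmaB_maps (hbW : b ∈ d.Wp p) (hbl : ∀ j, j ≠ p → -(b (d.Δ j)) ∈ d.DeltaP p)
    {α : V} (hα : α ∈ d.Pos) (hαP : α ∉ d.DeltaP p) :
    d.sigmaB b p α ∈ d.Pos ∧ d.sigmaB b p α ∉ d.DeltaP p := by
  unfold sigmaB
  by_cases h : ⟪d.fw p, α⟫ = 0
  · rw [if_pos h]
    have h1 : α ∈ d.PhiPpos p := d.mem_phiPpos_iff.mpr ⟨hα, h⟩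
    have h2 := d.wp_symm_phiPpos hbW hbl h1
    refine ⟨(d.mem_phiPpos_iff.mp h2).1, ?_⟩
    intro hmem
    apply hαP
    have h3 := d.wp_deltaPFin hbl (d.deltaP_iff_deltaPFin.mp hmem)
    rw [map_neg, neg_neg, b.apply_symm_apply] at h3
    exact d.deltaP_iff_deltaPFin.mpr h3
  · rw [if_neg h]
    refine ⟨d.wp_symm_posC hbW hα h, ?_⟩
    intro hmem
    obtain ⟨k, hk, hkeq⟩ := d.mem_deltaP_iff.mp hmem
    apply h
    rw [← d.inner_fw_wp_symm hbW, ← hkeq, d.inner_fw_delta, if_neg (fun hh => hk hh.symm)]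

lemma tauB_maps (hbW : b ∈ d.Wp p) (hbl : ∀ j, j ≠ p → -(b (d.Δ j)) ∈ d.DeltaP p)
    {α : V} (hα : α ∈ d.Pos) (hαP : α ∉ d.DeltaP p) :
    d.tauB b p α ∈ d.Pos ∧ d.tauB b p α ∉ d.DeltaP p := by
  have h := d.sigmaB_maps (b := b⁻¹) (inv_mem hbW) (d.hbl_inv hbl) hα hαP
  have he : d.sigmaB b⁻¹ p α = d.tauB b p α := by
    unfold sigmaB tauB
    rfl
  rwa [he] at h

end Core

section Core2

variable {a b w : V ≃ₗᵢ[ℝ] V} {p : Fin d.r}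

lemma deltaIdx_one {α : V} (h : w α ∈ d.Pos) : d.deltaIdx w α = 1 := by
  unfold deltaIdx; rw [if_pos h]

lemma deltaIdx_zero {α : V} (h : w α ∉ d.Pos) : d.deltaIdx w α = 0 := by
  unfold deltaIdx; rw [if_neg h]

lemma xi_term_eq (haW : a ∈ d.W) (hal : ∀ α ∈ d.Pos, -(a α) ∈ d.Pos)
    (hbW : b ∈ d.Wp p) (hbl : ∀ j, j ≠ p → -(b (d.Δ j)) ∈ d.DeltaP p)
    (hwW : w ∈ d.W) {α : V} (hαΦ : α ∈ d.Φ) (s : ℂ) :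
    xi ((⟪d.fw p, coroot V α⟫ : ℂ) * (-(d.cp p : ℂ) - s) + (d.ht α : ℂ)
        + (d.deltaIdx w α : ℂ))
      = xi ((⟪d.fw p, coroot V (d.sigmaB b p α)⟫ : ℂ) * s + (d.ht (d.sigmaB b p α) : ℂ)
        + (d.deltaIdx (a * w * b) (d.sigmaB b p α) : ℂ)) := by
  unfold sigmaB
  by_cases h : ⟪d.fw p, α⟫ = 0
  · rw [if_pos h]
    have hk : ⟪d.fw p, coroot V α⟫ = 0 :=
      (d.kfw_zero_iff (d.phi_ne_zero hαΦ)).mpr h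
    have hkσ : ⟪d.fw p, coroot V (-(b.symm α))⟫ = 0 := by
      rw [k_neg, d.k_wp_symm hbW, hk, neg_zero]
    have hht : d.ht (-(b.symm α)) = d.ht α := by
      rw [d.ht_neg, d.ht_wp_symm hbW hbl, hk]; ring
    have hδ : d.deltaIdx (a * w * b) (-(b.symm α)) = d.deltaIdx w α := by
      unfold deltaIdx
      exact if_congr (d.delta1 haW hal hwW hαΦ) rfl rfl
    rw [hk, hkσ, hht, hδ]
    norm_num
  · rw [if_neg h]
    have hkσ : ⟪d.fw p, coroot V (b.symm α)⟫ = ⟪d.fw p, coroot V α⟫ :=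
      d.k_wp_symm hbW α
    have hht : d.ht (b.symm α) = d.cp p * ⟪d.fw p, coroot V α⟫ - d.ht α :=
      d.ht_wp_symm hbW hbl α
    have hδiff : ((a * w * b) (b.symm α) ∈ d.Pos ↔ w α ∉ d.Pos) :=
      d.delta2 haW hal hwW hαΦ
    rw [hkσ, hht]
    by_cases hw : w α ∈ d.Pos
    · rw [d.deltaIdx_one hw, d.deltaIdx_zero (fun hc => (hδiff.mp hc) hw)]
      rw [← xi_one_sub ((⟪d.fw p, coroot V α⟫ : ℂ) * s
        + ((d.cp p * ⟪d.fw p, coroot V α⟫ - d.ht α : ℝ) : ℂ) + ((0:ℕ) : ℂ))]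
      congr 1
      push_cast
      ring
    · rw [d.deltaIdx_zero hw, d.deltaIdx_one (hδiff.mpr hw)]
      rw [← xi_one_sub ((⟪d.fw p, coroot V α⟫ : ℂ) * s
        + ((d.cp p * ⟪d.fw p, coroot V α⟫ - d.ht α : ℝ) : ℂ) + ((1:ℕ) : ℂ))]
      congr 1
      push_cast
      ring

lemma pair_term_eq (haW : a ∈ d.W) (hal : ∀ α ∈ d.Pos, -(a α) ∈ d.Pos)
    (hbW : b ∈ d.Wp p) (hbl : ∀ j, j ≠ p → -(b (d.Δ j)) ∈ d.DeltaP p)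
    (hwW : w ∈ d.W) {α : V} (hαΦ : α ∈ d.Φ) (s : ℂ) :
    ((⟪d.fw p, coroot V α⟫ : ℂ) * (-(d.cp p : ℂ) - s) + (d.ht α : ℂ)
        + (d.deltaIdx w α : ℂ)) *
      ((⟪d.fw p, coroot V α⟫ : ℂ) * (-(d.cp p : ℂ) - s) + (d.ht α : ℂ)
        + (d.deltaIdx w α : ℂ) - 1)
      = ((⟪d.fw p, coroot V (d.sigmaB b p α)⟫ : ℂ) * s + (d.ht (d.sigmaB b p α) : ℂ)
        + (d.deltaIdx (a * w * b) (d.sigmaB b p α) : ℂ)) *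
        ((⟪d.fw p, coroot V (d.sigmaB b p α)⟫ : ℂ) * s + (d.ht (d.sigmaB b p α) : ℂ)
        + (d.deltaIdx (a * w * b) (d.sigmaB b p α) : ℂ) - 1) := by
  unfold sigmaB
  by_cases h : ⟪d.fw p, α⟫ = 0
  · rw [if_pos h]
    have hk : ⟪d.fw p, coroot V α⟫ = 0 :=
      (d.kfw_zero_iff (d.phi_ne_zero hαΦ)).mpr h
    have hkσ : ⟪d.fw p, coroot V (-(b.symm α))⟫ = 0 := by
      rw [k_neg, d.k_wp_symm hbW, hk, neg_zero]
    have hht : d.ht (-(b.symm α)) = d.ht α := by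
      rw [d.ht_neg, d.ht_wp_symm hbW hbl, hk]; ring
    have hδ : d.deltaIdx (a * w * b) (-(b.symm α)) = d.deltaIdx w α := by
      unfold deltaIdx
      exact if_congr (d.delta1 haW hal hwW hαΦ) rfl rfl
    rw [hk, hkσ, hht, hδ]
    norm_num
  · rw [if_neg h]
    have hkσ : ⟪d.fw p, coroot V (b.symm α)⟫ = ⟪d.fw p, coroot V α⟫ :=
      d.k_wp_symm hbW α
    have hht : d.ht (b.symm α) = d.cp p * ⟪d.fw p, coroot V α⟫ - d.ht α :=
      d.ht_wp_symm hbW hbl α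
    have hδiff : ((a * w * b) (b.symm α) ∈ d.Pos ↔ w α ∉ d.Pos) :=
      d.delta2 haW hal hwW hαΦ
    rw [hkσ, hht]
    by_cases hw : w α ∈ d.Pos
    · rw [d.deltaIdx_one hw, d.deltaIdx_zero (fun hc => (hδiff.mp hc) hw)]
      push_cast
      ring
    · rw [d.deltaIdx_zero hw, d.deltaIdx_one (hδiff.mpr hw)]
      push_cast
      ring

lemma d_term_eq (hbW : b ∈ d.Wp p) (hbl : ∀ j, j ≠ p → -(b (d.Δ j)) ∈ d.DeltaP p)
    (α : V) (s : ℂ) :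
    ((⟪d.fw p, coroot V α⟫ : ℂ) * (-(d.cp p : ℂ) - s) + (d.ht α : ℂ) - 1)
      = ((⟪d.fw p, coroot V (-(b.symm α))⟫ : ℂ) * s + (d.ht (-(b.symm α)) : ℂ) - 1) := by
  have hkσ : ⟪d.fw p, coroot V (-(b.symm α))⟫ = -⟪d.fw p, coroot V α⟫ := by
    rw [k_neg, d.k_wp_symm hbW]
  have hht : d.ht (-(b.symm α)) = d.ht α - d.cp p * ⟪d.fw p, coroot V α⟫ := by
    rw [d.ht_neg, d.ht_wp_symm hbW hbl]; ring
  rw [hkσ, hht]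
  push_cast
  ring

end Core2

section Core3

variable {a b w : V ≃ₗᵢ[ℝ] V} {p : Fin d.r}

lemma triple_neg_symm (γ : V) : (a * w * b) (-(b.symm γ)) = -(a (w γ)) := by
  rw [triple_apply, map_neg, b.apply_symm_apply, map_neg, map_neg]

lemma symm_mem_phi (hbW : b ∈ d.Wp p) {α : V} (hα : α ∈ d.Φ) : b.symm α ∈ d.Φ := by
  have h := d.W_maps_phi (d.Wp_le_W p (inv_mem hbW)) α hα
  rwa [inv_apply] at h

lemma count_eq (haW : a ∈ d.W) (hal : ∀ α ∈ d.Pos, -(a α) ∈ d.Pos)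
    (hbW : b ∈ d.Wp p) (hbl : ∀ j, j ≠ p → -(b (d.Δ j)) ∈ d.DeltaP p)
    (hwW : w ∈ d.W) :
    ((d.DeltaPFin p).filter (fun α => w α ∈ d.Pos)).card
      = ((d.DeltaPFin p).filter (fun α => (a * w * b) α ∈ d.Pos)).card := by
  apply Finset.card_nbij' (i := fun α => -(b.symm α)) (j := fun α => -(b α))
  · intro α hα
    rw [Finset.mem_coe, Finset.mem_filter] at hα ⊢
    obtain ⟨h1, h2⟩ := hα
    have hαΦ : α ∈ d.Φ := by
      obtain ⟨k, _, rfl⟩ := d.mem_deltaPFin_iff.mp h1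
      exact d.delta_mem_phi k
    exact ⟨d.wp_symm_deltaPFin hbl h1, (d.delta1 haW hal hwW hαΦ).mpr h2⟩
  · intro β hβ
    rw [Finset.mem_coe, Finset.mem_filter] at hβ ⊢
    obtain ⟨h1, h2⟩ := hβ
    have hβΦ : β ∈ d.Φ := by
      obtain ⟨k, _, rfl⟩ := d.mem_deltaPFin_iff.mp h1
      exact d.delta_mem_phi k
    have hγΦ : -(b β) ∈ d.Φ :=
      d.neg_mem_phi (d.W_maps_phi (d.Wp_le_W p hbW) β hβΦ)
    refine ⟨d.wp_deltaPFin hbl h1, ?_⟩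
    have hd := d.delta1 (w := w) (b := b) haW hal hwW hγΦ
    simp only [map_neg, neg_neg, b.symm_apply_apply] at hd ⊢
    exact hd.mp h2
  · intro α _; dsimp only; rw [map_neg, neg_neg, b.apply_symm_apply]
  · intro α _; dsimp only; rw [map_neg, neg_neg, b.symm_apply_apply]

lemma prodX_eq (haW : a ∈ d.W) (hal : ∀ α ∈ d.Pos, -(a α) ∈ d.Pos)
    (hbW : b ∈ d.Wp p) (hbl : ∀ j, j ≠ p → -(b (d.Δ j)) ∈ d.DeltaP p)
    (hwW : w ∈ d.W) (s : ℂ) :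
    ∏ α ∈ d.Pos.filter (fun α => α ∉ d.DeltaP p),
      xi ((⟪d.fw p, coroot V α⟫ : ℂ) * (-(d.cp p : ℂ) - s) + (d.ht α : ℂ)
        + (d.deltaIdx w α : ℂ))
    = ∏ α ∈ d.Pos.filter (fun α => α ∉ d.DeltaP p),
      xi ((⟪d.fw p, coroot V α⟫ : ℂ) * s + (d.ht α : ℂ)
        + (d.deltaIdx (a * w * b) α : ℂ)) := by
  apply Finset.prod_nbij' (i := d.sigmaB b p) (j := d.tauB b p)
  · intro α hα
    rw [Finset.mem_filter] at hα ⊢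
    exact (d.sigmaB_maps hbW hbl hα.1 hα.2).imp id id
  · intro α hα
    rw [Finset.mem_filter] at hα ⊢
    exact (d.tauB_maps hbW hbl hα.1 hα.2).imp id id
  · intro α _; exact d.tauB_sigmaB hbW α
  · intro α _; exact d.sigmaB_tauB hbW α
  · intro α hα
    rw [Finset.mem_filter] at hα
    exact d.xi_term_eq haW hal hbW hbl hwW (d.pos_sub_phi hα.1) s

lemma prodPair_eq (haW : a ∈ d.W) (hal : ∀ α ∈ d.Pos, -(a α) ∈ d.Pos)
    (hbW : b ∈ d.Wp p) (hbl : ∀ j, j ≠ p → -(b (d.Δ j)) ∈ d.DeltaP p)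
    (hwW : w ∈ d.W) (s : ℂ) :
    ∏ α ∈ d.Pos.filter (fun α => α ∉ d.DeltaP p),
      (((⟪d.fw p, coroot V α⟫ : ℂ) * (-(d.cp p : ℂ) - s) + (d.ht α : ℂ)
        + (d.deltaIdx w α : ℂ)) *
      ((⟪d.fw p, coroot V α⟫ : ℂ) * (-(d.cp p : ℂ) - s) + (d.ht α : ℂ)
        + (d.deltaIdx w α : ℂ) - 1))
    = ∏ α ∈ d.Pos.filter (fun α => α ∉ d.DeltaP p),
      (((⟪d.fw p, coroot V α⟫ : ℂ) * s + (d.ht α : ℂ)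
        + (d.deltaIdx (a * w * b) α : ℂ)) *
      ((⟪d.fw p, coroot V α⟫ : ℂ) * s + (d.ht α : ℂ)
        + (d.deltaIdx (a * w * b) α : ℂ) - 1)) := by
  apply Finset.prod_nbij' (i := d.sigmaB b p) (j := d.tauB b p)
  · intro α hα
    rw [Finset.mem_filter] at hα ⊢
    exact (d.sigmaB_maps hbW hbl hα.1 hα.2).imp id id
  · intro α hα
    rw [Finset.mem_filter] at hα ⊢
    exact (d.tauB_maps hbW hbl hα.1 hα.2).imp id id
  · intro α _; exact d.tauB_sigmaB hbW α
  · intro α _; exact d.sigmaB_tauB hbW α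
  · intro α hα
    rw [Finset.mem_filter] at hα
    exact d.pair_term_eq haW hal hbW hbl hwW (d.pos_sub_phi hα.1) s

lemma prodD_eq (haW : a ∈ d.W) (hal : ∀ α ∈ d.Pos, -(a α) ∈ d.Pos)
    (hbW : b ∈ d.Wp p) (hbl : ∀ j, j ≠ p → -(b (d.Δ j)) ∈ d.DeltaP p)
    (hwW : w ∈ d.W) (s : ℂ) :
    ∏ α ∈ d.Φ.filter (fun α => w α ∈ Set.range d.Δ ∧ α ∉ d.DeltaP p),
      ((⟪d.fw p, coroot V α⟫ : ℂ) * (-(d.cp p : ℂ) - s) + (d.ht α : ℂ) - 1)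
    = ∏ α ∈ d.Φ.filter (fun α => (a * w * b) α ∈ Set.range d.Δ ∧ α ∉ d.DeltaP p),
      ((⟪d.fw p, coroot V α⟫ : ℂ) * s + (d.ht α : ℂ) - 1) := by
  apply Finset.prod_nbij' (i := fun α => -(b.symm α)) (j := fun α => -(b α))
  · intro α hα
    rw [Finset.mem_filter] at hα ⊢
    obtain ⟨hαΦ, hrange, hP⟩ := hα
    refine ⟨d.neg_mem_phi (d.symm_mem_phi hbW hαΦ), ?_, ?_⟩
    · obtain ⟨m, hm⟩ := hrange
      obtain ⟨m', hm'⟩ := d.w0_delta haW hal m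
      rw [triple_neg_symm (a := a) (w := w) (b := b) _, ← hm, hm']
      exact ⟨m', rfl⟩
    · intro hmem
      apply hP
      have h3 := d.wp_deltaPFin hbl (d.deltaP_iff_deltaPFin.mp hmem)
      rw [map_neg, neg_neg, b.apply_symm_apply] at h3
      exact d.deltaP_iff_deltaPFin.mpr h3
  · intro β hβ
    rw [Finset.mem_filter] at hβ ⊢
    obtain ⟨hβΦ, hrange, hP⟩ := hβ
    refine ⟨d.neg_mem_phi (d.W_maps_phi (d.Wp_le_W p hbW) β hβΦ), ?_, ?_⟩
    · obtain ⟨m, hm⟩ := hrange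
      rw [triple_apply] at hm
      have h1 : w (b β) = a.symm (d.Δ m) := by
        have := congrArg a.symm hm.symm
        rwa [a.symm_apply_apply] at this
      obtain ⟨m', hm'⟩ := d.w0_symm_delta haW hal m
      rw [map_neg, h1, hm']
      exact ⟨m', rfl⟩
    · intro hmem
      apply hP
      have h3 := d.wp_symm_deltaPFin hbl (d.deltaP_iff_deltaPFin.mp hmem)
      rw [map_neg, neg_neg, b.symm_apply_apply] at h3
      exact d.deltaP_iff_deltaPFin.mpr h3
  · intro α _; rw [map_neg, neg_neg, b.apply_symm_apply]
  · intro α _; rw [map_neg, neg_neg, b.symm_apply_apply]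
  · intro α _
    exact d.d_term_eq hbW hbl α s

lemma Xtilde_eq (haW : a ∈ d.W) (hal : ∀ α ∈ d.Pos, -(a α) ∈ d.Pos)
    (hbW : b ∈ d.Wp p) (hbl : ∀ j, j ≠ p → -(b (d.Δ j)) ∈ d.DeltaP p)
    (hwW : w ∈ d.W) (s : ℂ) :
    d.Xtilde p w (-(d.cp p : ℂ) - s) = d.Xtilde p (a * w * b) s := by
  unfold Xtilde
  rw [d.count_eq haW hal hbW hbl hwW, d.prodX_eq haW hal hbW hbl hwW s]

lemma Qfactor_eq (haW : a ∈ d.W) (hal : ∀ α ∈ d.Pos, -(a α) ∈ d.Pos)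
    (hbW : b ∈ d.Wp p) (hbl : ∀ j, j ≠ p → -(b (d.Δ j)) ∈ d.DeltaP p)
    (hwW : w ∈ d.W) (s : ℂ) :
    d.Qfactor p w (-(d.cp p : ℂ) - s) = d.Qfactor p (a * w * b) s := by
  unfold Qfactor
  rw [d.count_eq haW hal hbW hbl hwW, d.prodD_eq haW hal hbW hbl hwW s,
    d.prodPair_eq haW hal hbW hbl hwW s]

end Core3

section Final

variable {a b : V ≃ₗᵢ[ℝ] V} {p : Fin d.r}

lemma hal_inv (hal : ∀ α ∈ d.Pos, -(a α) ∈ d.Pos) :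
    ∀ α ∈ d.Pos, -((a⁻¹) α) ∈ d.Pos := by
  intro α hα
  rw [inv_apply]
  exact d.w0_symm_long hal α hα

lemma frakW_bijOn (haW : a ∈ d.W) (hal : ∀ α ∈ d.Pos, -(a α) ∈ d.Pos)
    (hbW : b ∈ d.Wp p) (hbl : ∀ j, j ≠ p → -(b (d.Δ j)) ∈ d.DeltaP p) :
    Set.BijOn (fun v => a * v * b) (d.frakW p) (d.frakW p) := by
  refine ⟨fun v hv => d.frakW_closed haW hal hbW hbl hv, ?_, ?_⟩
  · intro x _ y _ h
    simp only at h
    exact mul_left_cancel (mul_right_cancel h)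
  · intro u hu
    refine ⟨a⁻¹ * u * b⁻¹, d.frakW_closed (inv_mem haW) (d.hal_inv hal)
      (inv_mem hbW) (d.hbl_inv hbl) hu, ?_⟩
    simp only
    group

lemma frakW_diff_bijOn (haW : a ∈ d.W) (hal : ∀ α ∈ d.Pos, -(a α) ∈ d.Pos)
    (hbW : b ∈ d.Wp p) (hbl : ∀ j, j ≠ p → -(b (d.Δ j)) ∈ d.DeltaP p)
    (w : V ≃ₗᵢ[ℝ] V) :
    Set.BijOn (fun v => a * v * b) (d.frakW p \ {w}) (d.frakW p \ {a * w * b}) := by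
  have hb := d.frakW_bijOn haW hal hbW hbl
  refine ⟨?_, fun x _ y _ h => mul_left_cancel (mul_right_cancel h), ?_⟩
  · rintro v ⟨hv, hvw⟩
    refine ⟨hb.1 hv, ?_⟩
    simp only [Set.mem_singleton_iff]
    intro h
    exact hvw (mul_left_cancel (mul_right_cancel h))
  · rintro u ⟨hu, huw⟩
    refine ⟨a⁻¹ * u * b⁻¹, ⟨d.frakW_closed (inv_mem haW) (d.hal_inv hal)
      (inv_mem hbW) (d.hbl_inv hbl) hu, ?_⟩, by simp only; group⟩
    simp only [Set.mem_singleton_iff]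
    intro h
    apply huw
    simp only [Set.mem_singleton_iff]
    rw [← h]
    group

lemma Qtilde_eq (haW : a ∈ d.W) (hal : ∀ α ∈ d.Pos, -(a α) ∈ d.Pos)
    (hbW : b ∈ d.Wp p) (hbl : ∀ j, j ≠ p → -(b (d.Δ j)) ∈ d.DeltaP p)
    {w : V ≃ₗᵢ[ℝ] V} (hw : w ∈ d.frakW p) (s : ℂ) :
    d.Qtilde p w (-(d.cp p : ℂ) - s) = d.Qtilde p (a * w * b) s := by
  unfold Qtilde
  apply finprod_mem_eq_of_bijOn (fun v => a * v * b)
    (d.frakW_diff_bijOn haW hal hbW hbl w)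
  rintro v ⟨hv, _⟩
  exact d.Qfactor_eq haW hal hbW hbl hv.1 s

lemma Qp_eq (haW : a ∈ d.W) (hal : ∀ α ∈ d.Pos, -(a α) ∈ d.Pos)
    (hbW : b ∈ d.Wp p) (hbl : ∀ j, j ≠ p → -(b (d.Δ j)) ∈ d.DeltaP p) (s : ℂ) :
    d.Qp p (-(d.cp p : ℂ) - s) = d.Qp p s := by
  unfold Qp
  apply finprod_mem_eq_of_bijOn (fun v => a * v * b)
    (d.frakW_bijOn haW hal hbW hbl)
  intro v hv
  exact d.Qfactor_eq haW hal hbW hbl hv.1 s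

lemma Xp_eq (haW : a ∈ d.W) (hal : ∀ α ∈ d.Pos, -(a α) ∈ d.Pos)
    (hbW : b ∈ d.Wp p) (hbl : ∀ j, j ≠ p → -(b (d.Δ j)) ∈ d.DeltaP p) (s : ℂ) :
    d.Xp p (-(d.cp p : ℂ) - s) = d.Xp p s := by
  unfold Xp
  apply finsum_mem_eq_of_bijOn (fun v => a * v * b)
    (d.frakW_bijOn haW hal hbW hbl)
  intro v hv
  rw [d.Qtilde_eq haW hal hbW hbl hv s, d.Xtilde_eq haW hal hbW hbl hv.1 s]

end Final

end RootSystemData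
end Aux
end Weng


open Weng

/-- For every `w ∈ 𝔚_p` one has `w₀ w w_p ∈ 𝔚_p`, and there is a sign `ε_p ∈ {1,-1}`,
depending only on `p`, such that `X̃_{p,w}(-c_p-s) = X̃_{p,w₀ w w_p}(s)`,
`Q̃_{p,w}(-c_p-s) = ε_p Q̃_{p,w₀ w w_p}(s)` and `Q_p(-c_p-s) = ε_p Q_p(s)`;
consequently `X_p(-c_p-s) = ε_p X_p(s)`. -/
theorem weng_Xtilde_Qtilde_functional_equation
    {V : Type} [NormedAddCommGroup V] [InnerProductSpace ℝ V] [FiniteDimensional ℝ V]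
    (d : RootSystemData V) (p : Fin d.r)
    (w₀ wₚ : V ≃ₗᵢ[ℝ] V)
    (hw₀W : w₀ ∈ d.W) (hw₀long : ∀ α ∈ d.Pos, -(w₀ α) ∈ d.Pos)
    (hwₚW : wₚ ∈ d.Wp p) (hwₚlong : ∀ j : Fin d.r, j ≠ p → -(wₚ (d.Δ j)) ∈ d.DeltaP p) :
    (∀ w ∈ d.frakW p, w₀ * w * wₚ ∈ d.frakW p) ∧
    ∃ ε : ℂ, (ε = 1 ∨ ε = -1) ∧
      ∀ w ∈ d.frakW p, ∀ s : ℂ,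
        d.Xtilde p w (-(d.cp p : ℂ) - s) = d.Xtilde p (w₀ * w * wₚ) s ∧
        d.Qtilde p w (-(d.cp p : ℂ) - s) = ε * d.Qtilde p (w₀ * w * wₚ) s ∧
        d.Qp p (-(d.cp p : ℂ) - s) = ε * d.Qp p s ∧
        d.Xp p (-(d.cp p : ℂ) - s) = ε * d.Xp p s := by
  refine ⟨fun w hw => d.frakW_closed hw₀W hw₀long hwₚW hwₚlong hw, 1, Or.inl rfl, ?_⟩
  intro w hw s
  refine ⟨d.Xtilde_eq hw₀W hw₀long hwₚW hwₚlong hw.1 s, ?_, ?_, ?_⟩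
  · rw [one_mul]
    exact d.Qtilde_eq hw₀W hw₀long hwₚW hwₚlong hw s
  · rw [one_mul]
    exact d.Qp_eq hw₀W hw₀long hwₚW hwₚlong s
  · rw [one_mul]
    exact d.Xp_eq hw₀W hw₀long hwₚW hwₚlong s
end
end

section
/- Let α ∈ Φ⁺ \ Φ_p⁺ with ⟨ρ_p, α^∨⟩ < 0. Then there exist α_j ∈ Δ_p and β ∈ Φ⁺ \ Φ_p⁺ such that β^∨ = α^∨ + α_j^∨. Moreover, if in addition w ∈ 𝔚_p and α ∈ w⁻¹Φ⁻, then α_j and β can be chosen so that also β ∈ w⁻¹Φ⁻. -/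
open scoped Classical RealInnerProductSpace

noncomputable section

open Weng

namespace WengAux

open Weng RootSystemData

variable {V : Type} [NormedAddCommGroup V] [InnerProductSpace ℝ V] [FiniteDimensional ℝ V]

lemma inner_coroot_right (α x : V) : ⟪x, coroot V α⟫ = 2 / ⟪α, α⟫ * ⟪x, α⟫ :=
  real_inner_smul_right x α _

lemma coroot_neg (x : V) : coroot V (-x) = -coroot V x := by
  simp [coroot, inner_neg_neg]

lemma coroot_isometry (w : V ≃ₗᵢ[ℝ] V) (x : V) : coroot V (w x) = w (coroot V x) := by
  rw [coroot, coroot, LinearIsometryEquiv.inner_map_map, LinearIsometryEquiv.map_smul]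

lemma srefl_apply (α x : V) : srefl V α x = x - ⟪x, coroot V α⟫ • α := by
  rw [srefl, Submodule.reflection_orthogonal_apply, Submodule.reflection_singleton_apply, coroot]
  rw [real_inner_smul_right, real_inner_comm x α]
  simp only [RCLike.ofReal_real_eq_id, id_eq]
  rw [← real_inner_self_eq_norm_sq]
  module

variable (d : RootSystemData V)

lemma phi_ne_zero {x : V} (hx : x ∈ d.Φ) : x ≠ 0 := fun h => d.hzero (h ▸ hx)

lemma phi_inner_pos {x : V} (hx : x ∈ d.Φ) : 0 < ⟪x, x⟫ := by
  rw [real_inner_self_eq_norm_sq]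
  exact pow_pos (norm_pos_iff.mpr (phi_ne_zero d hx)) 2

lemma delta_mem_phi (j : Fin d.r) : d.Δ j ∈ d.Φ := d.hPosSub (d.hΔPos j)

lemma neg_mem_phi {x : V} (hx : x ∈ d.Φ) : -x ∈ d.Φ := by
  rcases d.hPosDec x hx with ⟨h1, _⟩ | ⟨_, h2⟩
  · exact d.hNegSub x h1
  · exact d.hPosSub h2

lemma srefl_mem_phi (j : Fin d.r) {x : V} (hx : x ∈ d.Φ) : srefl V (d.Δ j) x ∈ d.Φ := by
  rw [srefl_apply]
  exact d.hrefl (d.Δ j) (delta_mem_phi d j) x hx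

lemma srefl_srefl (a x : V) : srefl V a (srefl V a x) = x := Submodule.reflection_involutive _ x

lemma W_mem_iff' {w : V ≃ₗᵢ[ℝ] V} (hw : w ∈ d.W) : ∀ x : V, (x ∈ d.Φ ↔ w x ∈ d.Φ) := by
  induction hw using Subgroup.closure_induction with
  | mem s hs =>
    obtain ⟨j, rfl⟩ := hs
    intro x
    simp only
    constructor
    · exact srefl_mem_phi d j
    · intro h
      have h2 := srefl_mem_phi d j h
      rwa [srefl_srefl] at h2
  | one => simp
  | mul a b _ _ ha hb =>
    intro x
    rw [hb x, ha (b x)]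
    rfl
  | inv a _ ha =>
    intro x
    rw [ha (a⁻¹ x)]
    simp

lemma W_mem_iff {w : V ≃ₗᵢ[ℝ] V} (hw : w ∈ d.W) (x : V) : x ∈ d.Φ ↔ w x ∈ d.Φ :=
  W_mem_iff' d hw x

lemma fw_inner_delta (i l : Fin d.r) :
    ⟪d.fw i, d.Δ l⟫ = if i = l then ⟪d.Δ l, d.Δ l⟫ / 2 else 0 := by
  have h := d.hfw i l
  rw [inner_coroot_right] at h
  have hB : ⟪d.Δ l, d.Δ l⟫ ≠ 0 := (phi_inner_pos d (delta_mem_phi d l)).ne'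
  split_ifs with he
  · rw [he] at h ⊢
    field_simp at h ⊢
    simp only [↓reduceIte, mul_one] at h
    linarith
  · rw [if_neg he] at h
    field_simp at h
    linarith

lemma pos_coeff {ε : V} (hε : ε ∈ d.Pos) : ∃ c : Fin d.r → ℕ,
    ε = ∑ l, (c l : ℝ) • d.Δ l ∧ ∀ i, ⟪d.fw i, ε⟫ = (c i : ℝ) * (⟪d.Δ i, d.Δ i⟫ / 2) := by
  obtain ⟨c, hc⟩ := d.hPosComb ε hε
  refine ⟨c, hc, fun i => ?_⟩
  rw [hc, inner_sum]
  simp only [real_inner_smul_right, fw_inner_delta, mul_ite, mul_zero]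
  simp [Finset.sum_ite_eq]

lemma fw_pos_nonneg {ε : V} (hε : ε ∈ d.Pos) (i : Fin d.r) : 0 ≤ ⟪d.fw i, ε⟫ := by
  obtain ⟨c, _, h⟩ := pos_coeff d hε
  rw [h i]
  have := phi_inner_pos d (delta_mem_phi d i)
  positivity

lemma fw_coroot_nonneg {ε : V} (hε : ε ∈ d.Pos) (i : Fin d.r) :
    0 ≤ ⟪d.fw i, coroot V ε⟫ := by
  rw [inner_coroot_right]
  have h1 := phi_inner_pos d (d.hPosSub hε)
  have h2 := fw_pos_nonneg d hε i
  positivity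

lemma sum_fw_pos {ε : V} (hε : ε ∈ d.Pos) : 0 < ∑ i, ⟪d.fw i, ε⟫ := by
  obtain ⟨c, hsum, h⟩ := pos_coeff d hε
  have hex : ∃ i, c i ≠ 0 := by
    by_contra hno
    push_neg at hno
    apply phi_ne_zero d (d.hPosSub hε)
    rw [hsum]
    simp [hno]
  obtain ⟨i, hi⟩ := hex
  have hpos : 0 < ⟪d.fw i, ε⟫ := by
    rw [h i]
    have h1 := phi_inner_pos d (delta_mem_phi d i)
    have h2 : 0 < (c i : ℝ) := by exact_mod_cast Nat.pos_of_ne_zero hi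
    positivity
  calc (0:ℝ) < ⟪d.fw i, ε⟫ := hpos
    _ ≤ ∑ i, ⟪d.fw i, ε⟫ := Finset.single_le_sum (fun j _ => fw_pos_nonneg d hε j) (Finset.mem_univ i)

lemma sum_fw_coroot_pos {ε : V} (hε : ε ∈ d.Pos) : 0 < ∑ i, ⟪d.fw i, coroot V ε⟫ := by
  simp only [inner_coroot_right]
  rw [← Finset.mul_sum]
  have h1 := phi_inner_pos d (d.hPosSub hε)
  have h2 := sum_fw_pos d hε
  positivity

lemma fw_span_zero (p : Fin d.r) {x : V} (hx : x ∈ Submodule.span ℝ (d.DeltaP p)) :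
    ⟪d.fw p, x⟫ = 0 := by
  induction hx using Submodule.span_induction with
  | mem y hy =>
    obtain ⟨j, hj, rfl⟩ := hy
    rw [fw_inner_delta, if_neg (Ne.symm hj)]
  | zero => simp
  | add y z _ _ hy hz => rw [inner_add_right, hy, hz, add_zero]
  | smul t y _ hy => rw [real_inner_smul_right, hy, mul_zero]

lemma mem_negS_iff {x : V} : x ∈ d.NegS ↔ -x ∈ d.Pos := by
  constructor
  · rintro h
    obtain ⟨y, hy, rfl⟩ := Finset.mem_image.mp h
    rwa [neg_neg]
  · intro h
    exact Finset.mem_image.mpr ⟨-x, h, neg_neg x⟩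

lemma mem_pos_sdiff (p : Fin d.r) {β : V} (hβ : β ∈ d.Φ) (hfw : 0 < ⟪d.fw p, β⟫) :
    β ∈ d.Pos \ d.PhiPpos p := by
  have hβPos : β ∈ d.Pos := by
    rcases d.hPosDec β hβ with ⟨h1, _⟩ | ⟨_, h2⟩
    · exact h1
    · exfalso
      have := fw_pos_nonneg d h2 p
      rw [inner_neg_right] at this
      linarith
  refine Finset.mem_sdiff.mpr ⟨hβPos, fun hmem => ?_⟩
  have hsp : β ∈ Submodule.span ℝ (d.DeltaP p) :=
    (Finset.mem_filter.mp (Finset.mem_inter.mp hmem).2).2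
  have := fw_span_zero d p hsp
  linarith

lemma fw_pos_of_sdiff (p : Fin d.r) {β : V} (hβ : β ∈ d.Pos \ d.PhiPpos p) :
    0 < ⟪d.fw p, β⟫ := by
  obtain ⟨h1, h2⟩ := Finset.mem_sdiff.mp hβ
  rcases lt_or_eq_of_le (fw_pos_nonneg d h1 p) with h | h
  · exact h
  · exfalso
    apply h2
    obtain ⟨c, hsum, hco⟩ := pos_coeff d h1
    have hcp : c p = 0 := by
      have hB := phi_inner_pos d (delta_mem_phi d p)
      have := hco p
      rw [← h] at this
      have : (c p : ℝ) = 0 := by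
        rcases mul_eq_zero.mp this.symm with h' | h'
        · exact h'
        · linarith
      exact_mod_cast this
    have hsp : β ∈ Submodule.span ℝ (d.DeltaP p) := by
      rw [hsum]
      apply Submodule.sum_mem
      intro l _
      by_cases hl : l = p
      · rw [hl, hcp]
        simp
      · exact Submodule.smul_mem _ _ (Submodule.subset_span ⟨l, hl, rfl⟩)
    exact Finset.mem_inter.mpr ⟨h1, Finset.mem_filter.mpr ⟨d.hPosSub h1, hsp⟩⟩

lemma eq_simple_of_fw_zero {δ : V} (hδ : δ ∈ d.Pos) (k : Fin d.r)
    (h : ∀ i, i ≠ k → ⟪d.fw i, δ⟫ = 0) : δ = d.Δ k := by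
  obtain ⟨c, hsum, hco⟩ := pos_coeff d hδ
  have hci : ∀ i, i ≠ k → (c i : ℝ) = 0 := by
    intro i hi
    have hB := phi_inner_pos d (delta_mem_phi d i)
    have := (hco i).symm.trans (h i hi)
    rcases mul_eq_zero.mp this with h' | h'
    · exact h'
    · linarith
  have hδk : δ = (c k : ℝ) • d.Δ k := by
    rw [hsum, Finset.sum_eq_single k]
    · intro l _ hl
      rw [hci l hl, zero_smul]
    · intro hk
      exact absurd (Finset.mem_univ k) hk
  have := d.hreduced (d.Δ k) (delta_mem_phi d k) (c k : ℝ) (by rw [← hδk]; exact_mod_cast d.hPosSub hδ)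
  rcases this with h1 | h1
  · rw [hδk, h1, one_smul]
  · exfalso
    have : (0:ℝ) ≤ (c k : ℝ) := Nat.cast_nonneg _
    rw [h1] at this
    linarith


lemma fw_zero_of_coroot_zero {ε : V} (hε : ε ∈ d.Φ) {i : Fin d.r}
    (h : ⟪d.fw i, coroot V ε⟫ = 0) : ⟪d.fw i, ε⟫ = 0 := by
  rw [inner_coroot_right] at h
  have h1 := phi_inner_pos d hε
  rcases mul_eq_zero.mp h with h' | h'
  · exfalso
    rw [div_eq_zero_iff] at h'
    rcases h' with h'' | h'' <;> linarith
  · exact h'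

omit [FiniteDimensional ℝ V] in
lemma coroot_case1 (x y : V) (hx : 0 < ⟪x, x⟫) (hy : 0 < ⟪y, y⟫)
    (hN : 2 / ⟪x, x⟫ * ⟪x, y⟫ = -1) :
    coroot V (x - (2 / ⟪y, y⟫ * ⟪x, y⟫) • y) = coroot V x + coroot V y := by
  have hxne : ⟪x, x⟫ ≠ 0 := hx.ne'
  have hyne : ⟪y, y⟫ ≠ 0 := hy.ne'
  have hip : ⟪x, y⟫ = -⟪x, x⟫ / 2 := by field_simp at hN; linarith
  have hself : ⟪x - (2 / ⟪y, y⟫ * ⟪x, y⟫) • y, x - (2 / ⟪y, y⟫ * ⟪x, y⟫) • y⟫ = ⟪x, x⟫ := by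
    simp only [inner_sub_left, inner_sub_right, real_inner_smul_left, real_inner_smul_right,
      real_inner_comm y x]
    field_simp
    ring
  rw [coroot, hself, coroot, coroot, hip]
  match_scalars
  · field_simp
  · field_simp

end WengAux


/-- Let `α ∈ Φ⁺ \ Φ_p⁺` with `⟨ρ_p, α^∨⟩ < 0`. Then there are `α_j ∈ Δ_p` and
`β ∈ Φ⁺ \ Φ_p⁺` with `β^∨ = α^∨ + α_j^∨`; moreover if `w ∈ 𝔚_p` and `α ∈ w⁻¹Φ⁻`,
then `α_j` and `β` can be chosen with also `β ∈ w⁻¹Φ⁻`. -/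
theorem weng_coroot_raising
    {V : Type} [NormedAddCommGroup V] [InnerProductSpace ℝ V] [FiniteDimensional ℝ V]
    (d : RootSystemData V) (p : Fin d.r)
    (α : V) (hα : α ∈ d.Pos \ d.PhiPpos p) (hneg : ⟪d.rhoP p, coroot V α⟫ < 0) :
    (∃ j : Fin d.r, j ≠ p ∧ ∃ β ∈ d.Pos \ d.PhiPpos p,
        coroot V β = coroot V α + coroot V (d.Δ j)) ∧
    ∀ w ∈ d.frakW p, w α ∈ d.NegS →
      ∃ j : Fin d.r, j ≠ p ∧ ∃ β ∈ d.Pos \ d.PhiPpos p,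
        coroot V β = coroot V α + coroot V (d.Δ j) ∧ w β ∈ d.NegS := by
  classical
  obtain ⟨hαPos, hαnot⟩ := Finset.mem_sdiff.mp hα
  have hαΦ : α ∈ d.Φ := d.hPosSub hαPos
  have hA : 0 < ⟪α, α⟫ := WengAux.phi_inner_pos d hαΦ
  have hαfw : 0 < ⟪d.fw p, α⟫ := WengAux.fw_pos_of_sdiff d p hα
  have hαspan : α ∉ Submodule.span ℝ (d.DeltaP p) := by
    intro hsp
    have := WengAux.fw_span_zero d p hsp
    linarith
  -- Step B: find a simple root α_j ∈ Δ_p with ⟪α_j, α^∨⟫ < 0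
  obtain ⟨γ, hγmem, hγneg⟩ : ∃ γ ∈ d.PhiPpos p, ⟪γ, coroot V α⟫ < 0 := by
    by_contra hcon
    push_neg at hcon
    have h0 : 0 ≤ ⟪d.rhoP p, coroot V α⟫ := by
      rw [RootSystemData.rhoP, real_inner_smul_left, sum_inner]
      have hs : 0 ≤ ∑ γ ∈ d.PhiPpos p, ⟪γ, coroot V α⟫ :=
        Finset.sum_nonneg fun γ hγ => hcon γ hγ
      positivity
    linarith
  have hγPos : γ ∈ d.Pos := (Finset.mem_inter.mp hγmem).1
  have hγsp : γ ∈ Submodule.span ℝ (d.DeltaP p) :=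
    (Finset.mem_filter.mp (Finset.mem_inter.mp hγmem).2).2
  obtain ⟨c, hcsum, hcinner⟩ := WengAux.pos_coeff d hγPos
  have hcp : (c p : ℝ) = 0 := by
    have h1 := WengAux.fw_span_zero d p hγsp
    have h2 := hcinner p
    rw [h1] at h2
    have hB := WengAux.phi_inner_pos d (WengAux.delta_mem_phi d p)
    rcases mul_eq_zero.mp h2.symm with h' | h'
    · exact h'
    · linarith
  obtain ⟨j, hj⟩ : ∃ j : Fin d.r, (c j : ℝ) * ⟪d.Δ j, coroot V α⟫ < 0 := by
    by_contra hcon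
    push_neg at hcon
    have h0 : 0 ≤ ⟪γ, coroot V α⟫ := by
      rw [hcsum, sum_inner]
      refine Finset.sum_nonneg fun l _ => ?_
      rw [real_inner_smul_left]
      exact hcon l
    linarith
  have hjneg : ⟪d.Δ j, coroot V α⟫ < 0 := by
    by_contra hcon
    push_neg at hcon
    have : 0 ≤ (c j : ℝ) * ⟪d.Δ j, coroot V α⟫ :=
      mul_nonneg (Nat.cast_nonneg _) hcon
    linarith
  have hjp : j ≠ p := by
    rintro rfl
    rw [hcp, zero_mul] at hj
    exact lt_irrefl 0 hj
  -- Step C: construct β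
  have hjΦ : d.Δ j ∈ d.Φ := WengAux.delta_mem_phi d j
  have hB : 0 < ⟪d.Δ j, d.Δ j⟫ := WengAux.phi_inner_pos d hjΦ
  obtain ⟨n, hn⟩ := d.hcrys α hαΦ (d.Δ j) hjΦ
  obtain ⟨m, hm⟩ := d.hcrys (d.Δ j) hjΦ α hαΦ
  have hNip : ⟪d.Δ j, coroot V α⟫ = 2 / ⟪α, α⟫ * ⟪α, d.Δ j⟫ := by
    rw [WengAux.inner_coroot_right, real_inner_comm (d.Δ j) α]
  have hMip : ⟪α, coroot V (d.Δ j)⟫ = 2 / ⟪d.Δ j, d.Δ j⟫ * ⟪α, d.Δ j⟫ :=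
    WengAux.inner_coroot_right _ _
  have hipneg : ⟪α, d.Δ j⟫ < 0 := by
    by_contra hcon
    push_neg at hcon
    have : 0 ≤ ⟪d.Δ j, coroot V α⟫ := by
      rw [hNip]
      positivity
    linarith
  have hnneg : (n : ℝ) < 0 := by rw [← hn]; exact hjneg
  have hmneg : (m : ℝ) < 0 := by
    rw [← hm, hMip]
    exact mul_neg_of_pos_of_neg (by positivity) hipneg
  -- strict Cauchy–Schwarz
  have hCS : ⟪α, d.Δ j⟫ ^ 2 < ⟪α, α⟫ * ⟪d.Δ j, d.Δ j⟫ := by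
    have hnorm : ‖-d.Δ j‖ ≠ 0 := by
      simpa using WengAux.phi_ne_zero d hjΦ
    have hne : ‖-d.Δ j‖ • α ≠ ‖α‖ • (-d.Δ j) := by
      intro he
      apply hαspan
      have heq : α = (‖-d.Δ j‖)⁻¹ • (‖α‖ • (-d.Δ j)) := by
        rw [← he, smul_smul, inv_mul_cancel₀ hnorm, one_smul]
      rw [heq]
      exact Submodule.smul_mem _ _ (Submodule.smul_mem _ _
        (Submodule.neg_mem _ (Submodule.subset_span ⟨j, hjp, rfl⟩)))
    have hlt : ⟪α, -d.Δ j⟫ < ‖α‖ * ‖-d.Δ j‖ := by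
      have := inner_lt_norm_mul_iff_real.mpr hne
      linarith [this]
    rw [inner_neg_right, norm_neg] at hlt
    have e1 : ⟪α, α⟫ = ‖α‖ ^ 2 := real_inner_self_eq_norm_sq α
    have e2 : ⟪d.Δ j, d.Δ j⟫ = ‖d.Δ j‖ ^ 2 := real_inner_self_eq_norm_sq _
    nlinarith [norm_nonneg α, norm_nonneg (d.Δ j)]
  have hnm : (n : ℝ) * (m : ℝ) < 4 := by
    have hkey : (n : ℝ) * (m : ℝ) * (⟪α, α⟫ * ⟪d.Δ j, d.Δ j⟫) = 4 * ⟪α, d.Δ j⟫ ^ 2 := by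
      rw [← hn, ← hm, hNip, hMip]
      field_simp
      ring
    nlinarith [mul_pos hA hB]
  have hn1 : n ≤ -1 := by
    have : n < 0 := by exact_mod_cast hnneg
    omega
  have hm1 : m ≤ -1 := by
    have : m < 0 := by exact_mod_cast hmneg
    omega
  have hcase : n = -1 ∨ m = -1 := by
    by_contra hcon
    push_neg at hcon
    have h1 : n ≤ -2 := by omega
    have h2 : m ≤ -2 := by omega
    have : (4 : ℝ) ≤ (n : ℝ) * (m : ℝ) := by
      have := mul_le_mul_of_nonpos_right (show (n:ℝ) ≤ -2 by exact_mod_cast h1)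
        (show (m:ℝ) ≤ 0 by linarith)
      nlinarith [show (m:ℝ) ≤ -2 by exact_mod_cast h2]
    linarith
  obtain ⟨β, hβΦ, a, b, ha, hb, hβeq, hβco⟩ :
      ∃ β ∈ d.Φ, ∃ a b : ℝ, 0 < a ∧ 0 ≤ b ∧ β = a • α + b • d.Δ j ∧
        coroot V β = coroot V α + coroot V (d.Δ j) := by
    rcases hcase with hc | hc
    · -- n = -1 : β = α - ⟪α, (Δ j)^∨⟫ • Δ j
      have hNval : 2 / ⟪α, α⟫ * ⟪α, d.Δ j⟫ = -1 := by
        rw [← hNip, hn, hc]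
        norm_num
      refine ⟨α - (2 / ⟪d.Δ j, d.Δ j⟫ * ⟪α, d.Δ j⟫) • d.Δ j, ?_, 1, -(m : ℝ),
        one_pos, by linarith, ?_, ?_⟩
      · have := d.hrefl (d.Δ j) hjΦ α hαΦ
        rwa [hMip] at this
      · rw [← hMip, hm]
        module
      · exact WengAux.coroot_case1 α (d.Δ j) hA hB hNval
    · -- m = -1 : β = Δ j - ⟪Δ j, α^∨⟫ • α
      have hMval : 2 / ⟪d.Δ j, d.Δ j⟫ * ⟪d.Δ j, α⟫ = -1 := by
        rw [real_inner_comm α (d.Δ j), ← hMip, hm, hc]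
        norm_num
      refine ⟨d.Δ j - (2 / ⟪α, α⟫ * ⟪d.Δ j, α⟫) • α, ?_, -(n : ℝ), 1,
        by linarith, zero_le_one, ?_, ?_⟩
      · have := d.hrefl α hαΦ (d.Δ j) hjΦ
        rwa [WengAux.inner_coroot_right] at this
      · rw [real_inner_comm α (d.Δ j), ← hNip, hn]
        module
      · rw [WengAux.coroot_case1 (d.Δ j) α hB hA hMval, add_comm]
  have hβmem : β ∈ d.Pos \ d.PhiPpos p := by
    apply WengAux.mem_pos_sdiff d p hβΦ
    rw [hβeq, inner_add_right, real_inner_smul_right, real_inner_smul_right]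
    have h0 : ⟪d.fw p, d.Δ j⟫ = 0 := by
      rw [WengAux.fw_inner_delta, if_neg (Ne.symm hjp)]
    rw [h0, mul_zero, add_zero]
    exact mul_pos ha hαfw
  refine ⟨⟨j, hjp, β, hβmem, hβco⟩, ?_⟩
  -- Step D
  intro w hw hwα
  refine ⟨j, hjp, β, hβmem, hβco, ?_⟩
  obtain ⟨hwW, hwΔ⟩ := hw
  have hwβΦ : w β ∈ d.Φ := (WengAux.W_mem_iff d hwW β).mp hβΦ
  have hco' : coroot V (w β) = coroot V (w α) + coroot V (w (d.Δ j)) := by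
    rw [WengAux.coroot_isometry, WengAux.coroot_isometry, WengAux.coroot_isometry, hβco,
      map_add]
  have hu : -(w α) ∈ d.Pos := (WengAux.mem_negS_iff d).mp hwα
  have huΦ : -(w α) ∈ d.Φ := d.hPosSub hu
  have hcowα : coroot V (w α) = -coroot V (-(w α)) := by
    rw [← WengAux.coroot_neg, neg_neg]
  have key : w β ∉ d.Pos := by
    intro hwβPos
    rcases hwΔ j hjp with hrange | hnegS
    · obtain ⟨k, hk⟩ := hrange
      have e1 : coroot V (w β) + coroot V (-(w α)) = coroot V (d.Δ k) := by
        rw [hco', hcowα, ← hk]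
        abel
      have hz : ∀ i : Fin d.r, i ≠ k →
          ⟪d.fw i, w β⟫ = 0 ∧ ⟪d.fw i, -(w α)⟫ = 0 := by
        intro i hi
        have h1 : ⟪d.fw i, coroot V (w β)⟫ + ⟪d.fw i, coroot V (-(w α))⟫ = 0 := by
          rw [← inner_add_right, e1, d.hfw, if_neg hi]
        have h2 := WengAux.fw_coroot_nonneg d hwβPos i
        have h3 := WengAux.fw_coroot_nonneg d hu i
        constructor
        · exact WengAux.fw_zero_of_coroot_zero d hwβΦ (by linarith)
        · exact WengAux.fw_zero_of_coroot_zero d huΦ (by linarith)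
      have hd1 : w β = d.Δ k :=
        WengAux.eq_simple_of_fw_zero d hwβPos k fun i hi => (hz i hi).1
      have hd2 : -(w α) = d.Δ k :=
        WengAux.eq_simple_of_fw_zero d hu k fun i hi => (hz i hi).2
      rw [hd1, hd2] at e1
      have hzero : coroot V (d.Δ k) = 0 := add_eq_right.mp e1
      have h1 := d.hfw k k
      rw [hzero, if_pos rfl] at h1
      simp at h1
    · obtain ⟨γ₂, hγ₂Pos, hγ₂⟩ := Finset.mem_image.mp hnegS
      have hγ₂Φ : γ₂ ∈ d.Φ := d.hPosSub hγ₂Pos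
      have e1 : coroot V (w β) + coroot V (-(w α)) + coroot V γ₂ = 0 := by
        rw [hco', hcowα]
        have : coroot V (w (d.Δ j)) = -coroot V γ₂ := by
          rw [← hγ₂, WengAux.coroot_neg]
        rw [this]
        abel
      have s1 := WengAux.sum_fw_coroot_pos d hwβPos
      have s2 := WengAux.sum_fw_coroot_pos d hu
      have s3 := WengAux.sum_fw_coroot_pos d hγ₂Pos
      have hsum : (∑ i, ⟪d.fw i, coroot V (w β)⟫) + (∑ i, ⟪d.fw i, coroot V (-(w α))⟫)
          + (∑ i, ⟪d.fw i, coroot V γ₂⟫) = 0 := by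
        rw [← Finset.sum_add_distrib, ← Finset.sum_add_distrib]
        have : ∀ i ∈ Finset.univ, ⟪d.fw i, coroot V (w β)⟫ + ⟪d.fw i, coroot V (-(w α))⟫
            + ⟪d.fw i, coroot V γ₂⟫ = 0 := by
          intro i _
          rw [← inner_add_right, ← inner_add_right, e1, inner_zero_right]
        rw [Finset.sum_congr rfl this, Finset.sum_const_zero]
      linarith
  rcases d.hPosDec (w β) hwβΦ with ⟨h1, _⟩ | ⟨_, h2⟩
  · exact absurd h1 key
  · exact (WengAux.mem_negS_iff d).mpr h2
end
end
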